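/- arXiv:2006.00462 — 6 statements merged into one kernel-verified Lean document; each statement's English description precedes it below -/
import Mathlib

section
/- Let X be a normed space and let Ω ⊂ X be subamenable at x̄ ∈ Ω. Then the contingent tangent cone coincides with the weak sequential tangent cone: T_Ω(x̄) = T^w_Ω(x̄) := {u ∈ X : ∃ t_k ↓ 0 and a sequence u_k converging weakly to u with x̄ + t_k u_k ∈ Ω for all k}. -/
open Filter Topology Set Metric Pointwise

noncomputable section

variable {E : Type*} [NormedAddCommGroup E] [NormedSpace ℝ E]

/-- Bouligand–Severi contingent tangent cone. -/
def contTangent (Ω : Set E) (x : E) : Set E :=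
  {u | ∃ t : ℕ → ℝ, ∃ v : ℕ → E,
    (∀ k, 0 < t k) ∧ Tendsto t atTop (𝓝 0) ∧ Tendsto v atTop (𝓝 u) ∧
    ∀ k, x + t k • v k ∈ Ω}

/-- Dini–Hadamard subnormal cone. -/
def subNormal (Ω : Set E) (x : E) : Set (E →L[ℝ] ℝ) :=
  {v | ∀ u ∈ contTangent Ω x, v u ≤ 0}

/-- Normal cone of convex analysis. -/
def convNormal (Θ : Set E) (y : E) : Set (E →L[ℝ] ℝ) :=
  {l | ∀ z ∈ Θ, l (z - y) ≤ 0}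

/-- Difference quotient of an extended-real-valued function. -/
def diffQuot (φ : E → EReal) (x : E) (t : ℝ) (u : E) : EReal :=
  ((t⁻¹ : ℝ) : EReal) * (φ (x + t • u) - φ x)

/-- Dini–Hadamard subderivative. -/
def subDeriv (φ : E → EReal) (x : E) (u : E) : EReal :=
  Filter.liminf (fun p : ℝ × E => diffQuot φ x p.1 p.2) ((𝓝[>] (0:ℝ)) ×ˢ 𝓝 u)

/-- Dini–Hadamard subdifferential. -/
def subDiff (φ : E → EReal) (x : E) : Set (E →L[ℝ] ℝ) :=
  {v | ∀ u, (v u : EReal) ≤ subDeriv φ x u}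

/-- Proper extended-real-valued function. -/
def properFun (ψ : E → EReal) : Prop := (∀ u, ψ u ≠ ⊥) ∧ ∃ u, ψ u ≠ ⊤

def epiSet (g : E → EReal) : Set (E × ℝ) := {p | g p.1 ≤ (p.2 : EReal)}

/-- Painlevé–Kuratowski sequential outer limit as t ↓ 0. -/
def outerLim {α : Type*} [TopologicalSpace α] (S : ℝ → Set α) : Set α :=
  {z | ∃ t : ℕ → ℝ, ∃ w : ℕ → α, (∀ k, 0 < t k) ∧ Tendsto t atTop (𝓝 0) ∧
    Tendsto w atTop (𝓝 z) ∧ ∀ k, w k ∈ S (t k)}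

/-- Painlevé–Kuratowski sequential inner limit as t ↓ 0. -/
def innerLim {α : Type*} [TopologicalSpace α] (S : ℝ → Set α) : Set α :=
  {z | ∀ t : ℕ → ℝ, (∀ k, 0 < t k) → Tendsto t atTop (𝓝 0) →
    ∃ w : ℕ → α, Tendsto w atTop (𝓝 z) ∧ ∀ᶠ k in atTop, w k ∈ S (t k)}

/-- Epi-differentiability at a point. -/
def epiDiffAt (φ : E → EReal) (x : E) : Prop :=
  outerLim (fun t => epiSet (fun u => diffQuot φ x t u)) = epiSet (subDeriv φ x) ∧
  innerLim (fun t => epiSet (fun u => diffQuot φ x t u)) = epiSet (subDeriv φ x)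

/-- Relative Lipschitz continuity around x w.r.t. Ω with constant ℓ. -/
def RelLipschitzOn (φ : E → EReal) (Ω : Set E) (x : E) (ℓ : ℝ) : Prop :=
  ∃ U ∈ 𝓝 x, ∀ y ∈ Ω ∩ U, ∀ z ∈ Ω ∩ U, φ y - φ z ≤ ((ℓ * ‖y - z‖ : ℝ) : EReal)

def RelLipschitzAround (φ : E → EReal) (Ω : Set E) (x : E) : Prop :=
  ∃ ℓ : ℝ, 0 ≤ ℓ ∧ RelLipschitzOn φ Ω x ℓ

/-- Local Lipschitz continuity of an extended-real-valued function around x (finite nearby). -/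
def LocLipschitzAt (φ : E → EReal) (x : E) : Prop :=
  ∃ ℓ : ℝ, ∃ U ∈ 𝓝 x, (∀ z ∈ U, φ z ≠ ⊤) ∧
    ∀ z ∈ U, ∀ w ∈ U, φ z - φ w ≤ ((ℓ * ‖z - w‖ : ℝ) : EReal)

/-- Dini–Hadamard regularity. -/
def DHRegular (φ : E → EReal) (x : E) : Prop :=
  ∀ u, sSup ((fun v : E →L[ℝ] ℝ => (v u : EReal)) '' subDiff φ x) = subDeriv φ x u

def weakStarClosure (S : Set (E →L[ℝ] ℝ)) : Set (E →L[ℝ] ℝ) :=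
  closure (show Set (WeakDual ℝ E) from S)

def IsWeakStarClosed (S : Set (E →L[ℝ] ℝ)) : Prop :=
  IsClosed (show Set (WeakDual ℝ E) from S)

/-- Weak (sequential) contingent tangent cone. -/
def weakTangent {X : Type*} [NormedAddCommGroup X] [NormedSpace ℝ X]
    (Ω : Set X) (x : X) : Set X :=
  {u | ∃ t : ℕ → ℝ, ∃ v : ℕ → X,
    (∀ k, 0 < t k) ∧ Tendsto t atTop (𝓝 0) ∧
    (∀ l : X →L[ℝ] ℝ, Tendsto (fun k => l (v k)) atTop (𝓝 (l u))) ∧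
    ∀ k, x + t k • v k ∈ Ω}

/-- Auxiliary: a weakly convergent sequence is norm-bounded (Banach–Steinhaus). -/
lemma aux_weak_bdd {X : Type*} [NormedAddCommGroup X] [NormedSpace ℝ X]
    {v : ℕ → X} {u : X}
    (h : ∀ l : X →L[ℝ] ℝ, Tendsto (fun k => l (v k)) atTop (𝓝 (l u))) :
    ∃ M : ℝ, 0 ≤ M ∧ ∀ k, ‖v k‖ ≤ M := by
  have key : ∀ (k : ℕ) (l : StrongDual ℝ X),
      ((NormedSpace.inclusionInDoubleDualLi ℝ (v k) :
        StrongDual ℝ (StrongDual ℝ X))) l = l (v k) := fun k l => rfl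
  have hpw : ∀ (l : StrongDual ℝ X), ∃ C, ∀ k,
      ‖(NormedSpace.inclusionInDoubleDualLi ℝ (v k) :
        StrongDual ℝ (StrongDual ℝ X)) l‖ ≤ C := by
    intro l
    obtain ⟨B, hB⟩ := ((h l).norm).bddAbove_range
    exact ⟨B, fun k => by rw [key]; exact hB (Set.mem_range_self k)⟩
  obtain ⟨C, hC⟩ := banach_steinhaus hpw
  refine ⟨C, le_trans (norm_nonneg (v 0)) ?_, fun k => ?_⟩
  · have := hC 0
    rwa [(NormedSpace.inclusionInDoubleDualLi ℝ).norm_map] at this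
  · have := hC k
    rwa [(NormedSpace.inclusionInDoubleDualLi ℝ).norm_map] at this

/-- Auxiliary: the conic hull of a convex set (shifted by `y`) is convex. -/
lemma aux_convex_conicS {Y : Type*} [NormedAddCommGroup Y] [NormedSpace ℝ Y]
    {Θ : Set Y} (hΘ : Convex ℝ Θ) (y : Y) :
    Convex ℝ {w : Y | ∃ s : ℝ, 0 ≤ s ∧ ∃ θ ∈ Θ, w = s • (θ - y)} := by
  rintro w₁ ⟨s₁, hs₁, θ₁, hθ₁, rfl⟩ w₂ ⟨s₂, hs₂, θ₂, hθ₂, rfl⟩ a b ha hb hab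
  by_cases hσ : a * s₁ + b * s₂ = 0
  · have h1 : a * s₁ = 0 := by nlinarith [mul_nonneg ha hs₁, mul_nonneg hb hs₂]
    have h2 : b * s₂ = 0 := by nlinarith [mul_nonneg ha hs₁, mul_nonneg hb hs₂]
    refine ⟨0, le_refl 0, θ₁, hθ₁, ?_⟩
    rw [smul_smul, smul_smul, h1, h2]
    simp
  · have hσpos : 0 < a * s₁ + b * s₂ :=
      lt_of_le_of_ne (by positivity) (Ne.symm hσ)
    refine ⟨a * s₁ + b * s₂, le_of_lt hσpos,
      ((a * s₁) / (a * s₁ + b * s₂)) • θ₁ + ((b * s₂) / (a * s₁ + b * s₂)) • θ₂,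
      hΘ hθ₁ hθ₂ (by positivity) (by positivity) (by field_simp), ?_⟩
    match_scalars <;> field_simp <;> ring

/-- Auxiliary: distance estimate along a direction in the closure of the conic hull. -/
lemma aux_infDist_cone_dir {Y : Type*} [NormedAddCommGroup Y] [NormedSpace ℝ Y]
    {Θ : Set Y} (hΘ : Convex ℝ Θ) {y : Y} (hy : y ∈ Θ)
    {w : Y} (hw : w ∈ closure {w : Y | ∃ s : ℝ, 0 ≤ s ∧ ∃ θ ∈ Θ, w = s • (θ - y)})
    {ε : ℝ} (hε : 0 < ε) :
    ∃ δ > 0, ∀ t : ℝ, 0 < t → t < δ → infDist (y + t • w) Θ ≤ ε * t := by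
  obtain ⟨w', ⟨s, hs, θ, hθ, rfl⟩, hww'⟩ := Metric.mem_closure_iff.mp hw ε hε
  refine ⟨(s + 1)⁻¹, by positivity, fun t ht htδ => ?_⟩
  have hts : t * s ≤ 1 := by
    have h1 : t * (s + 1) < 1 := by
      have := mul_lt_mul_of_pos_right htδ (show (0:ℝ) < s + 1 by linarith)
      rwa [inv_mul_cancel₀ (by positivity : (s:ℝ) + 1 ≠ 0)] at this
    nlinarith
  have hmem : y + t • s • (θ - y) ∈ Θ := by
    have := hΘ hy hθ (by nlinarith [mul_nonneg ht.le hs] : (0:ℝ) ≤ 1 - t * s)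
      (mul_nonneg ht.le hs) (by ring)
    convert this using 1
    match_scalars <;> ring
  calc infDist (y + t • w) Θ ≤ dist (y + t • w) (y + t • s • (θ - y)) :=
        infDist_le_dist_of_mem hmem
    _ = t * dist w (s • (θ - y)) := by
        rw [dist_eq_norm, dist_eq_norm,
          show y + t • w - (y + t • s • (θ - y)) = t • (w - s • (θ - y)) by module,
          norm_smul, Real.norm_eq_abs, abs_of_pos ht]
    _ ≤ t * ε := by nlinarith [dist_nonneg (x := w) (y := s • (θ - y))]
    _ = ε * t := mul_comm _ _

set_option maxHeartbeats 1600000 in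
/-- for a set subamenable at `xb` (with subamenability data
`Y, f, Θ, κ, U`), the contingent tangent cone coincides with the weak sequential
tangent cone. -/
theorem tangent_eq_weakTangent_of_subamenable
    {X Y : Type*} [NormedAddCommGroup X] [NormedSpace ℝ X]
    [NormedAddCommGroup Y] [NormedSpace ℝ Y]
    (Ω : Set X) (xb : X) (hxb : xb ∈ Ω) (hΩcl : IsClosed Ω)
    (f : X → Y) (Θ : Set Y) (κ : ℝ) (U : Set X)
    (hU : U ∈ 𝓝 xb) (hf : ContDiffAt ℝ 1 f xb)
    (hΘcl : IsClosed Θ) (hΘconv : Convex ℝ Θ) (hfxb : f xb ∈ Θ) (hκ : 0 < κ)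
    (hrep : Ω ∩ U = {x ∈ U | f x ∈ Θ})
    (hsub : ∀ x ∈ U, infDist x Ω ≤ κ * infDist (f x) Θ) :
    contTangent Ω xb = weakTangent Ω xb := by
  apply Set.Subset.antisymm
  · rintro u ⟨t, v, ht, ht0, hv, hmem⟩
    exact ⟨t, v, ht, ht0, fun l => ((l.continuous.tendsto u).comp hv), hmem⟩
  rintro u ⟨t, v, htpos, ht0, hweak, hmem⟩
  obtain ⟨M, hM0, hM⟩ := aux_weak_bdd hweak
  set y := f xb with hy
  set f' := fderiv ℝ f xb with hf'def
  have hdiff : HasFDerivAt f f' xb := (hf.differentiableAt one_ne_zero).hasFDerivAt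
  have hlo := hasFDerivAt_iff_isLittleO_nhds_zero.mp hdiff
  have htv0 : Tendsto (fun k => t k • v k) atTop (𝓝 0) := by
    have hbound : ∀ k, ‖t k • v k‖ ≤ M * t k := by
      intro k
      rw [norm_smul, Real.norm_eq_abs, abs_of_pos (htpos k)]
      nlinarith [htpos k, hM k]
    have hMt : Tendsto (fun k => M * t k) atTop (𝓝 0) := by
      simpa using ht0.const_mul M
    exact squeeze_zero_norm hbound hMt
  have hxk : Tendsto (fun k => xb + t k • v k) atTop (𝓝 xb) := by
    simpa using tendsto_const_nhds.add htv0
  have hUev : ∀ᶠ k in atTop, xb + t k • v k ∈ U := hxk.eventually_mem hU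
  have hΘk : ∀ᶠ k in atTop, f (xb + t k • v k) ∈ Θ := by
    filter_upwards [hUev] with k hk
    have h2 : xb + t k • v k ∈ Ω ∩ U := ⟨hmem k, hk⟩
    rw [hrep] at h2
    exact h2.2
  set S := {w : Y | ∃ s : ℝ, 0 ≤ s ∧ ∃ θ ∈ Θ, w = s • (θ - y)} with hSdef
  set e : ℕ → Y := fun k => (t k)⁻¹ • (f (xb + t k • v k) - y) - f' (v k) with hedef
  have heq : ∀ k, e k = (t k)⁻¹ • (f (xb + t k • v k) - f xb - f' (t k • v k)) := by
    intro k
    rw [hedef]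
    simp only [map_smul, smul_sub, inv_smul_smul₀ (htpos k).ne', ← hy]
  have he0 : Tendsto e atTop (𝓝 0) := by
    rw [NormedAddCommGroup.tendsto_nhds_zero]
    intro ε hε
    have hc : (0:ℝ) < ε / (M + 1) := by positivity
    filter_upwards [htv0.eventually (hlo.def hc)] with k hk
    have h2 : ‖t k • v k‖ ≤ t k * M := by
      rw [norm_smul, Real.norm_eq_abs, abs_of_pos (htpos k)]
      exact mul_le_mul_of_nonneg_left (hM k) (htpos k).le
    have h3 : ‖f (xb + t k • v k) - f xb - f' (t k • v k)‖ ≤ ε / (M + 1) * (t k * M) :=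
      le_trans hk (by nlinarith)
    rw [heq k, norm_smul, Real.norm_eq_abs, abs_of_pos (inv_pos.mpr (htpos k))]
    calc (t k)⁻¹ * ‖f (xb + t k • v k) - f xb - f' (t k • v k)‖
        ≤ (t k)⁻¹ * (ε / (M + 1) * (t k * M)) :=
          mul_le_mul_of_nonneg_left h3 (inv_pos.mpr (htpos k)).le
      _ = ε * M / (M + 1) := by
          field_simp [(htpos k).ne']
      _ < ε := by
          rw [div_lt_iff₀ (by positivity : (0:ℝ) < M + 1)]
          nlinarith
  have hcS : ∀ᶠ k in atTop, (t k)⁻¹ • (f (xb + t k • v k) - y) ∈ S := by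
    filter_upwards [hΘk] with k hk
    exact ⟨(t k)⁻¹, (inv_pos.mpr (htpos k)).le, _, hk, rfl⟩
  have hwC : f' u ∈ closure S := by
    by_contra hw
    obtain ⟨m, b, hb1, hb2⟩ := geometric_hahn_banach_closed_point
      (aux_convex_conicS hΘconv y).closure isClosed_closure hw
    have h1 : Tendsto (fun k => (m.comp f') (v k)) atTop (𝓝 ((m.comp f') u)) := hweak _
    have h2 : Tendsto (fun k => m (e k)) atTop (𝓝 0) := by
      have := (m.continuous.tendsto 0).comp he0
      simpa [Function.comp_def] using this
    have h3 := h1.add h2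
    rw [add_zero] at h3
    have h4 : ∀ k, (m.comp f') (v k) + m (e k)
        = m ((t k)⁻¹ • (f (xb + t k • v k) - y)) := by
      intro k
      simp only [hedef, ContinuousLinearMap.comp_apply, map_sub]
      ring
    have htend : Tendsto (fun k => m ((t k)⁻¹ • (f (xb + t k • v k) - y))) atTop
        (𝓝 (m (f' u))) := by
      have := h3.congr h4
      simpa using this
    have hle : m (f' u) ≤ b :=
      le_of_tendsto htend (hcS.mono fun k hk => (hb1 _ (subset_closure hk)).le)
    linarith
  have hquot : Tendsto (fun τ : ℝ => infDist (xb + τ • u) Ω / τ) (𝓝[>] (0:ℝ)) (𝓝 0) := by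
    rw [NormedAddCommGroup.tendsto_nhds_zero]
    intro ε hε
    set ε₁ := ε / (2 * κ + 1) with hε₁def
    have hε₁ : (0:ℝ) < ε₁ := by rw [hε₁def]; positivity
    obtain ⟨δ, hδ, hδ2⟩ := aux_infDist_cone_dir hΘconv hfxb hwC hε₁
    have htu : Tendsto (fun τ : ℝ => τ • u) (𝓝[>] (0:ℝ)) (𝓝 0) := by
      have h5 : Tendsto (fun τ : ℝ => τ • u) (𝓝 (0:ℝ)) (𝓝 ((0:ℝ) • u)) :=
        (continuous_id.smul continuous_const).tendsto 0
      simpa using h5.mono_left nhdsWithin_le_nhds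
    have hUev' : ∀ᶠ τ in 𝓝[>] (0:ℝ), xb + τ • u ∈ U := by
      have h5 : Tendsto (fun τ : ℝ => xb + τ • u) (𝓝[>] (0:ℝ)) (𝓝 xb) := by
        simpa using tendsto_const_nhds.add htu
      exact h5.eventually_mem hU
    have hc' : (0:ℝ) < ε₁ / (‖u‖ + 1) := by positivity
    have hIoo : Ioo (0:ℝ) δ ∈ 𝓝[>] (0:ℝ) :=
      Ioo_mem_nhdsGT_of_mem ⟨le_refl 0, hδ⟩
    filter_upwards [hUev', htu.eventually (hlo.def hc'), hIoo] with τ hτU hτlo hτIoo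
    obtain ⟨hτpos, hτδ⟩ := hτIoo
    have hstep1 : ‖f (xb + τ • u) - y - τ • f' u‖ ≤ ε₁ * τ := by
      rw [map_smul] at hτlo
      have hnu : ‖τ • u‖ = τ * ‖u‖ := by
        rw [norm_smul, Real.norm_eq_abs, abs_of_pos hτpos]
      rw [hnu] at hτlo
      calc ‖f (xb + τ • u) - y - τ • f' u‖ ≤ ε₁ / (‖u‖ + 1) * (τ * ‖u‖) := hτlo
        _ ≤ ε₁ * τ := by
            rw [div_mul_eq_mul_div, div_le_iff₀ (by positivity : (0:ℝ) < ‖u‖ + 1)]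
            nlinarith [norm_nonneg u, mul_nonneg hε₁.le hτpos.le]
    have hstep2 : infDist (y + τ • f' u) Θ ≤ ε₁ * τ := hδ2 τ hτpos hτδ
    have hmain : infDist (xb + τ • u) Ω ≤ κ * (2 * ε₁ * τ) := by
      have h7 : infDist (f (xb + τ • u)) Θ
          ≤ infDist (y + τ • f' u) Θ + dist (f (xb + τ • u)) (y + τ • f' u) :=
        infDist_le_infDist_add_dist
      have h8 : dist (f (xb + τ • u)) (y + τ • f' u)
          = ‖f (xb + τ • u) - y - τ • f' u‖ := by
        rw [dist_eq_norm, sub_add_eq_sub_sub]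
      calc infDist (xb + τ • u) Ω ≤ κ * infDist (f (xb + τ • u)) Θ := hsub _ hτU
        _ ≤ κ * (ε₁ * τ + ε₁ * τ) := by
            apply mul_le_mul_of_nonneg_left _ hκ.le
            rw [h8] at h7
            linarith
        _ = κ * (2 * ε₁ * τ) := by ring
    have hnn : 0 ≤ infDist (xb + τ • u) Ω / τ := div_nonneg infDist_nonneg hτpos.le
    rw [Real.norm_eq_abs, abs_of_nonneg hnn, div_lt_iff₀ hτpos]
    have hkey : 2 * κ * ε₁ < ε := by
      rw [hε₁def, mul_div_assoc', div_lt_iff₀ (by positivity : (0:ℝ) < 2 * κ + 1)]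
      nlinarith
    calc infDist (xb + τ • u) Ω ≤ κ * (2 * ε₁ * τ) := hmain
      _ < ε * τ := by nlinarith [mul_lt_mul_of_pos_right hkey hτpos]
  set t' : ℕ → ℝ := fun k => ((k : ℝ) + 1)⁻¹ with ht'def
  have ht'pos : ∀ k, 0 < t' k := fun k => by positivity
  have ht'0 : Tendsto t' atTop (𝓝 0) := by
    simpa [ht'def, one_div] using tendsto_one_div_add_atTop_nhds_zero_nat (𝕜 := ℝ)
  have ht'in : Tendsto t' atTop (𝓝[>] (0:ℝ)) :=
    tendsto_nhdsWithin_of_tendsto_nhds_of_eventually_within _ ht'0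
      (Eventually.of_forall fun k => ht'pos k)
  have hq := hquot.comp ht'in
  have hlt : ∀ k, infDist (xb + t' k • u) Ω
      < infDist (xb + t' k • u) Ω + t' k * t' k := fun k => by nlinarith [ht'pos k]
  choose ω hωΩ hωd using fun k =>
    (Metric.infDist_lt_iff (⟨xb, hxb⟩ : Ω.Nonempty)).mp (hlt k)
  have hnorm : ∀ k, ‖(t' k)⁻¹ • (ω k - xb) - u‖
      ≤ infDist (xb + t' k • u) Ω / t' k + t' k := by
    intro k
    have h9 : (t' k)⁻¹ • (ω k - xb) - u = (t' k)⁻¹ • (ω k - (xb + t' k • u)) := by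
      match_scalars <;> field_simp [(ht'pos k).ne']
    rw [h9, norm_smul, Real.norm_eq_abs, abs_of_pos (inv_pos.mpr (ht'pos k))]
    have h11 : ‖ω k - (xb + t' k • u)‖ = dist (xb + t' k • u) (ω k) := by
      rw [dist_eq_norm, norm_sub_rev]
    rw [h11]
    calc (t' k)⁻¹ * dist (xb + t' k • u) (ω k)
        ≤ (t' k)⁻¹ * (infDist (xb + t' k • u) Ω + t' k * t' k) :=
          mul_le_mul_of_nonneg_left (hωd k).le (inv_pos.mpr (ht'pos k)).le
      _ = infDist (xb + t' k • u) Ω / t' k + t' k := by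
          rw [mul_add, ← div_eq_inv_mul, ← mul_assoc,
            inv_mul_cancel₀ (ht'pos k).ne', one_mul]
  refine ⟨t', fun k => (t' k)⁻¹ • (ω k - xb), ht'pos, ht'0, ?_, fun k => ?_⟩
  · rw [tendsto_iff_norm_sub_tendsto_zero]
    apply squeeze_zero (fun k => norm_nonneg _) hnorm
    have := hq.add ht'0
    simpa [Function.comp] using this
  · rw [smul_inv_smul₀ (ht'pos k).ne']
    simpa using hωΩ k
end
end

section
/- Let Ω be a nonempty closed subset of a normed space X, let x̄ ∈ Ω, and let φ(·) := dist(·; Ω). If Ω is convex, then dφ(x̄)(u) = dist(u; T_Ω(x̄)) for all u ∈ X. Furthermore, for any closed set Ω (not necessarily convex), if the formula dφ(x̄)(u) = dist(u; T_Ω(x̄)) holds for all u ∈ X, then ∂⁻φ(x̄) = N⁻_Ω(x̄) ∩ B*, where B* is the closed unit ball of X*. -/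
open Filter Topology Set Metric Pointwise

noncomputable section

variable {E : Type*} [NormedAddCommGroup E] [NormedSpace ℝ E]

section AuxProofs

variable {Y : Type*} [NormedAddCommGroup Y] [NormedSpace ℝ Y]

lemma zero_mem_contTangent' {Ω : Set Y} {xb : Y} (hxb : xb ∈ Ω) :
    (0 : Y) ∈ contTangent Ω xb := by
  refine ⟨fun k => 1 / (k + 1), fun _ => 0, fun k => by positivity,
    tendsto_one_div_add_atTop_nhds_zero_nat, tendsto_const_nhds, fun k => by simpa using hxb⟩

lemma smul_sub_mem_contTangent' {Ω : Set Y} {xb w : Y} (hconv : Convex ℝ Ω)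
    (hxb : xb ∈ Ω) (hw : w ∈ Ω) {t : ℝ} (ht : 0 < t) :
    t⁻¹ • (w - xb) ∈ contTangent Ω xb := by
  refine ⟨fun k => t * (1 / (k + 1)), fun _ => t⁻¹ • (w - xb), fun k => by positivity,
    ?_, tendsto_const_nhds, fun k => ?_⟩
  · simpa using tendsto_one_div_add_atTop_nhds_zero_nat.const_mul t
  · have h1 : (t * (1 / ((k : ℝ) + 1))) • t⁻¹ • (w - xb) = (1 / ((k : ℝ) + 1)) • (w - xb) := by
      rw [smul_smul]; congr 1; field_simp
    rw [h1]
    refine hconv.add_smul_sub_mem hxb hw ⟨by positivity, ?_⟩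
    rw [div_le_one (by positivity)]
    linarith [Nat.cast_nonneg (α := ℝ) k]

lemma key_lower' {Ω : Set Y} {xb : Y} (hconv : Convex ℝ Ω) (hne : Ω.Nonempty)
    (hxb : xb ∈ Ω) {t : ℝ} (ht : 0 < t) (u : Y) :
    t * infDist u (contTangent Ω xb) ≤ infDist (xb + t • u) Ω := by
  by_contra h
  push_neg at h
  obtain ⟨w, hw, hlt⟩ := (infDist_lt_iff hne).1 h
  have hmem := smul_sub_mem_contTangent' hconv hxb hw ht
  have h2 : infDist u (contTangent Ω xb) ≤ dist u (t⁻¹ • (w - xb)) :=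
    infDist_le_dist_of_mem hmem
  have heq : dist (xb + t • u) w = t * dist u (t⁻¹ • (w - xb)) := by
    rw [dist_eq_norm, dist_eq_norm, ← norm_smul_of_nonneg ht.le, smul_sub, smul_smul,
      mul_inv_cancel₀ ht.ne', one_smul]
    congr 1; abel
  nlinarith [mul_le_mul_of_nonneg_left h2 ht.le]

end AuxProofs

/-- generalized differentiation of the distance function in normed
spaces: the subderivative formula for convex sets, and the subdifferential formula
for any closed set satisfying the subderivative formula. -/
theorem distance_function_subderivative_subdifferential
    {X : Type*} [NormedAddCommGroup X] [NormedSpace ℝ X]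
    (Ω : Set X) (xb : X) (hne : Ω.Nonempty) (hcl : IsClosed Ω) (hxb : xb ∈ Ω) :
    (Convex ℝ Ω →
      ∀ u : X, subDeriv (fun x => ((infDist x Ω : ℝ) : EReal)) xb u =
        ((infDist u (contTangent Ω xb) : ℝ) : EReal)) ∧
    ((∀ u : X, subDeriv (fun x => ((infDist x Ω : ℝ) : EReal)) xb u =
        ((infDist u (contTangent Ω xb) : ℝ) : EReal)) →
      subDiff (fun x => ((infDist x Ω : ℝ) : EReal)) xb =
        subNormal Ω xb ∩ {v : X →L[ℝ] ℝ | ‖v‖ ≤ 1}) := by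
  set T : Set X := contTangent Ω xb with hT
  have hTne : T.Nonempty := ⟨0, zero_mem_contTangent' hxb⟩
  set φ : X → EReal := fun x => ((infDist x Ω : ℝ) : EReal) with hφ
  have hf : ∀ (t : ℝ) (u' : X), diffQuot φ xb t u' =
      ((t⁻¹ * infDist (xb + t • u') Ω : ℝ) : EReal) := by
    intro t u'
    simp [diffQuot, hφ, infDist_zero_of_mem hxb, EReal.coe_mul]
  constructor
  · -- Part 1
    intro hconv u
    set c : ℝ := infDist u T with hc
    have hsub : subDeriv φ xb u =
        Filter.liminf (fun p : ℝ × X => ((p.1⁻¹ * infDist (xb + p.1 • p.2) Ω : ℝ) : EReal))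
          ((𝓝[>] (0:ℝ)) ×ˢ 𝓝 u) := by
      unfold subDeriv
      congr 1
      funext p
      exact hf p.1 p.2
    rw [hsub]
    set F := ((𝓝[>] (0:ℝ)) ×ˢ 𝓝 u) with hF
    set f : ℝ × X → EReal := fun p => ((p.1⁻¹ * infDist (xb + p.1 • p.2) Ω : ℝ) : EReal) with hfdef
    refine le_antisymm ?_ ?_
    · -- liminf ≤ c
      by_contra hlt
      push_neg at hlt
      obtain ⟨r, hr1, hr2⟩ := EReal.lt_iff_exists_real_btwn.1 hlt
      have hcr : c < r := by exact_mod_cast hr1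
      obtain ⟨v, hvT, hdv⟩ := (infDist_lt_iff hTne).1 hcr
      obtain ⟨tk, vk, htk, htk0, hvk, hmem⟩ := hvT
      have hseq : Tendsto (fun k => ((tk k, u) : ℝ × X)) atTop F := by
        refine Tendsto.prodMk ?_ tendsto_const_nhds
        exact tendsto_nhdsWithin_of_tendsto_nhds_of_eventually_within _ htk0
          (Eventually.of_forall fun k => htk k)
      have hev : ∀ᶠ k in atTop, f (tk k, u) ≤ (r : EReal) := by
        have hnorm : Tendsto (fun k => ‖u - vk k‖) atTop (𝓝 ‖u - v‖) :=
          (tendsto_const_nhds.sub hvk).norm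
        have hdv' : ‖u - v‖ < r := by rwa [← dist_eq_norm]
        filter_upwards [hnorm.eventually_lt_const hdv'] with k hk
        have hb : (tk k)⁻¹ * infDist (xb + tk k • u) Ω ≤ ‖u - vk k‖ := by
          have h1 : infDist (xb + tk k • u) Ω ≤ tk k * ‖u - vk k‖ := by
            have := infDist_le_dist_of_mem (hmem k) (x := xb + tk k • u)
            calc infDist (xb + tk k • u) Ω ≤ dist (xb + tk k • u) (xb + tk k • vk k) := this
              _ = tk k * ‖u - vk k‖ := by
                  rw [dist_eq_norm, ← norm_smul_of_nonneg (htk k).le, smul_sub]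
                  congr 1; abel
          calc (tk k)⁻¹ * infDist (xb + tk k • u) Ω ≤ (tk k)⁻¹ * (tk k * ‖u - vk k‖) :=
                mul_le_mul_of_nonneg_left h1 (inv_nonneg.2 (htk k).le)
            _ = ‖u - vk k‖ := by rw [← mul_assoc, inv_mul_cancel₀ (htk k).ne', one_mul]
        exact EReal.coe_le_coe_iff.2 (hb.trans hk.le)
      have hfreq : ∃ᶠ p in F, f p ≤ (r : EReal) := hseq.frequently hev.frequently
      have := liminf_le_of_frequently_le hfreq
      exact absurd (this.trans_lt hr2) (lt_irrefl _)
    · -- c ≤ liminf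
      by_contra hlt
      push_neg at hlt
      obtain ⟨r, hr1, hr2⟩ := EReal.lt_iff_exists_real_btwn.1 hlt
      have hrc : r < c := by exact_mod_cast hr2
      have hev : ∀ᶠ p in F, (r : EReal) ≤ f p := by
        have hset : Ioi (0:ℝ) ×ˢ ball u (c - r) ∈ F :=
          prod_mem_prod self_mem_nhdsWithin (ball_mem_nhds u (by linarith))
        filter_upwards [hset] with p hp
        obtain ⟨hp1, hp2⟩ := hp
        have hp1' : (0:ℝ) < p.1 := hp1
        have hlow : p.1 * infDist p.2 T ≤ infDist (xb + p.1 • p.2) Ω :=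
          key_lower' hconv hne hxb hp1' p.2
        have hL : c ≤ infDist p.2 T + dist u p.2 := infDist_le_infDist_add_dist
        have hd : dist u p.2 < c - r := by rw [dist_comm]; exact mem_ball.1 hp2
        have h3 : r ≤ infDist p.2 T := by linarith
        have h4 : r ≤ p.1⁻¹ * infDist (xb + p.1 • p.2) Ω := by
          calc r ≤ infDist p.2 T := h3
            _ = p.1⁻¹ * (p.1 * infDist p.2 T) := by
                rw [← mul_assoc, inv_mul_cancel₀ hp1'.ne', one_mul]
            _ ≤ p.1⁻¹ * infDist (xb + p.1 • p.2) Ω :=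
                mul_le_mul_of_nonneg_left hlow (inv_nonneg.2 hp1'.le)
        exact EReal.coe_le_coe_iff.2 h4
      have := le_liminf_of_le (by isBoundedDefault) hev
      exact absurd (this.trans_lt hr1) (lt_irrefl _)
  · -- Part 2
    intro h
    ext v
    have hmem : v ∈ subDiff φ xb ↔ ∀ u : X, v u ≤ infDist u T := by
      constructor
      · intro hv u
        have := hv u
        rw [h u] at this
        exact_mod_cast this
      · intro hv u
        rw [h u]
        exact_mod_cast hv u
    rw [hmem]
    constructor
    · intro hv
      refine ⟨fun u huT => ?_, ?_⟩
      · have := hv u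
        rwa [infDist_zero_of_mem huT] at this
      · refine ContinuousLinearMap.opNorm_le_bound v zero_le_one fun u => ?_
        rw [one_mul, Real.norm_eq_abs, abs_le]
        constructor
        · have h1 := hv (-u)
          have h2 : infDist (-u) T ≤ dist (-u) 0 := infDist_le_dist_of_mem (zero_mem_contTangent' hxb)
          rw [dist_zero_right, norm_neg] at h2
          rw [map_neg] at h1
          linarith
        · have h1 := hv u
          have h2 : infDist u T ≤ dist u 0 := infDist_le_dist_of_mem (zero_mem_contTangent' hxb)
          rw [dist_zero_right] at h2
          linarith
    · rintro ⟨hN, hn⟩ u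
      refine le_of_not_gt fun hlt => ?_
      obtain ⟨w, hwT, hd⟩ := (infDist_lt_iff hTne).1 hlt
      have h1 : v u - v w ≤ ‖v‖ * ‖u - w‖ := by
        have := v.le_opNorm (u - w)
        rw [map_sub] at this
        calc v u - v w ≤ |v u - v w| := le_abs_self _
          _ = ‖v u - v w‖ := rfl
          _ ≤ ‖v‖ * ‖u - w‖ := this
      have hn' : ‖v‖ ≤ 1 := hn
      have h2 : ‖v‖ * ‖u - w‖ ≤ ‖u - w‖ := by
        nlinarith [norm_nonneg (u - w)]
      have h3 := hN w hwT
      rw [dist_eq_norm] at hd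
      linarith
end
end

section
/- Let X be a reflexive Banach space, let Ω ⊂ X be subamenable at x̄ ∈ Ω, and let φ(·) := dist(·; Ω). Then dφ(x̄)(u) = dist(u; T_Ω(x̄)) for all u ∈ X, and ∂⁻φ(x̄) = N⁻_Ω(x̄) ∩ B*, where B* is the closed unit ball of X*. Furthermore, φ is epi-differentiable at x̄ and its subderivative is given by the full limit dφ(x̄)(u) = lim_{t↓0} (φ(x̄+tu) − φ(x̄))/t for all u ∈ X. -/
open Filter Topology Set Metric Pointwise

noncomputable section

variable {E : Type*} [NormedAddCommGroup E] [NormedSpace ℝ E]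

namespace Aux12

variable {X Y : Type*} [NormedAddCommGroup X] [NormedSpace ℝ X]
  [NormedAddCommGroup Y] [NormedSpace ℝ Y]

/-- cone generated by Θ - yb -/
def cone (Θ : Set Y) (yb : Y) : Set Y := {p | ∃ s : ℝ, 0 < s ∧ yb + s • p ∈ Θ}

lemma zero_mem_cone {Θ : Set Y} {yb : Y} (h : yb ∈ Θ) : (0 : Y) ∈ cone Θ yb :=
  ⟨1, one_pos, by simpa⟩

lemma cone_mono {Θ : Set Y} {yb : Y} (hconv : Convex ℝ Θ) (hyb : yb ∈ Θ) {p : Y} {s t : ℝ}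
    (hs : 0 < s) (hmem : yb + s • p ∈ Θ) (ht : 0 < t) (hts : t ≤ s) : yb + t • p ∈ Θ := by
  have hkey : yb + t • p = (1 - t / s) • yb + (t / s) • (yb + s • p) := by
    have h1 : t / s * s = t := div_mul_cancel₀ t hs.ne'
    rw [smul_add, smul_smul, h1, ← add_assoc, ← add_smul]
    ring_nf
    rw [one_smul]
  rw [hkey]
  exact hconv hyb hmem (by rw [sub_nonneg, div_le_one hs]; exact hts)
    (le_of_lt (div_pos ht hs)) (by ring)

section Main

variable {f : X → Y} {Ω : Set X} {Θ : Set Y} {xb : X} {κ : ℝ} {U : Set X} {A : X →L[ℝ] Y}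

/-- Lemma B : approximate tangent points from the cone estimate. -/
lemma lemB (hxb : xb ∈ Ω) (hU : U ∈ 𝓝 xb) (hA : HasFDerivAt f A xb)
    (hΘconv : Convex ℝ Θ) (hfxb : f xb ∈ Θ) (hκ : 0 < κ)
    (hsub : ∀ x ∈ U, infDist x Ω ≤ κ * infDist (f x) Θ)
    (u : X) {ε : ℝ} (hε : 0 < ε) :
    ∀ᶠ t in 𝓝[>] (0:ℝ), ∃ v : X, xb + t • v ∈ Ω ∧
      ‖u - v‖ ≤ κ * infDist (A u) (cone Θ (f xb)) + ε := by
  set C := cone Θ (f xb) with hC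
  set d := infDist (A u) C with hd
  have hCne : C.Nonempty := ⟨0, zero_mem_cone hfxb⟩
  have hΩne : Ω.Nonempty := ⟨xb, hxb⟩
  -- choose p in the cone close to A u
  have hlt : d < d + ε / (3 * κ) := lt_add_of_pos_right _ (by positivity)
  obtain ⟨p, hpC, hpd⟩ := (infDist_lt_iff hCne).1 hlt
  obtain ⟨s, hs, hsp⟩ := hpC
  -- strict estimates
  set ε₂ : ℝ := ε / (3 * κ * (‖u‖ + 1)) with hε₂
  have hε₂pos : 0 < ε₂ := by positivity
  -- eventually conditions
  have hE1 : ∀ᶠ t in 𝓝[>] (0:ℝ), xb + t • u ∈ U := by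
    have hcont : Tendsto (fun t : ℝ => xb + t • u) (𝓝 0) (𝓝 xb) := by
      have : Continuous (fun t : ℝ => xb + t • u) := by continuity
      have h0 : xb + (0:ℝ) • u = xb := by simp
      simpa [h0] using this.tendsto 0
    exact (hcont.eventually_mem hU).filter_mono nhdsWithin_le_nhds
  have hE2 : ∀ᶠ t in 𝓝[>] (0:ℝ),
      ‖f (xb + t • u) - f xb - A ((xb + t • u) - xb)‖ ≤ ε₂ * ‖(xb + t • u) - xb‖ := by
    have hev := hA.isLittleO.def hε₂pos
    have hcont : Tendsto (fun t : ℝ => xb + t • u) (𝓝 0) (𝓝 xb) := by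
      have : Continuous (fun t : ℝ => xb + t • u) := by continuity
      have h0 : xb + (0:ℝ) • u = xb := by simp
      simpa [h0] using this.tendsto 0
    exact (hcont.eventually hev).filter_mono nhdsWithin_le_nhds
  have hE3 : Ioc (0:ℝ) s ∈ 𝓝[>] (0:ℝ) := Ioc_mem_nhdsGT_of_mem ⟨le_rfl, hs⟩
  filter_upwards [hE1, hE2, hE3] with t htU htd hts
  obtain ⟨ht0, htle⟩ := hts
  -- the point yb + t • p lies in Θ
  have hpt : f xb + t • p ∈ Θ := cone_mono hΘconv hfxb hs hsp ht0 htle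
  -- distance estimate
  have h1 : infDist (f (xb + t • u)) Θ ≤ t * (ε₂ * ‖u‖ + (d + ε / (3 * κ))) := by
    have hle := infDist_le_dist_of_mem (x := f (xb + t • u)) hpt
    have heq : (xb + t • u) - xb = t • u := by abel
    have h2 : dist (f (xb + t • u)) (f xb + t • p)
        ≤ ‖f (xb + t • u) - f xb - A (t • u)‖ + ‖t • (A u) - t • p‖ := by
      rw [dist_eq_norm]
      have : f (xb + t • u) - (f xb + t • p)
          = (f (xb + t • u) - f xb - A (t • u)) + (t • (A u) - t • p) := by
        rw [map_smul]; abel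
      rw [this]
      exact norm_add_le _ _
    have h3 : ‖f (xb + t • u) - f xb - A (t • u)‖ ≤ ε₂ * (t * ‖u‖) := by
      rw [heq] at htd
      calc ‖f (xb + t • u) - f xb - A (t • u)‖ ≤ ε₂ * ‖t • u‖ := htd
        _ = ε₂ * (|t| * ‖u‖) := by rw [norm_smul, Real.norm_eq_abs]
        _ = ε₂ * (t * ‖u‖) := by rw [abs_of_pos ht0]
    have h4 : ‖t • (A u) - t • p‖ ≤ t * (d + ε / (3 * κ)) := by
      rw [← smul_sub, norm_smul, Real.norm_eq_abs, abs_of_pos ht0]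
      have : ‖A u - p‖ ≤ d + ε / (3 * κ) := by
        rw [← dist_eq_norm]; exact le_of_lt hpd
      exact mul_le_mul_of_nonneg_left this (le_of_lt ht0)
    calc infDist (f (xb + t • u)) Θ ≤ _ := hle
      _ ≤ ε₂ * (t * ‖u‖) + t * (d + ε / (3 * κ)) := le_trans h2 (add_le_add h3 h4)
      _ = t * (ε₂ * ‖u‖ + (d + ε / (3 * κ))) := by ring
  -- transfer to Ω
  have h5 : infDist (xb + t • u) Ω < t * (κ * d + ε) := by
    have h6 := hsub _ htU
    have h7 : κ * (t * (ε₂ * ‖u‖ + (d + ε / (3 * κ)))) < t * (κ * d + ε) := by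
      have hu1 : ε₂ * ‖u‖ ≤ ε / (3 * κ) := by
        have hne : (‖u‖ : ℝ) + 1 ≠ 0 := by positivity
        have h8 : ε₂ * (‖u‖ + 1) = ε / (3 * κ) := by
          rw [hε₂]; field_simp
        nlinarith [hε₂pos]
      have h9 : κ * (ε / (3 * κ)) = ε / 3 := by field_simp
      have h10 : κ * (ε₂ * ‖u‖ + (d + ε / (3 * κ))) < κ * d + ε := by
        nlinarith [mul_le_mul_of_nonneg_left hu1 hκ.le, hε]
      calc κ * (t * (ε₂ * ‖u‖ + (d + ε / (3 * κ))))
          = t * (κ * (ε₂ * ‖u‖ + (d + ε / (3 * κ)))) := by ring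
        _ < t * (κ * d + ε) := by exact mul_lt_mul_of_pos_left h10 ht0
    calc infDist (xb + t • u) Ω ≤ κ * infDist (f (xb + t • u)) Θ := h6
      _ ≤ κ * (t * (ε₂ * ‖u‖ + (d + ε / (3 * κ)))) := by
          exact mul_le_mul_of_nonneg_left h1 hκ.le
      _ < t * (κ * d + ε) := h7
  obtain ⟨ω, hω, hωd⟩ := (infDist_lt_iff hΩne).1 h5
  refine ⟨t⁻¹ • (ω - xb), ?_, ?_⟩
  · have : xb + t • t⁻¹ • (ω - xb) = ω := by
      rw [smul_inv_smul₀ (ne_of_gt ht0)]; abel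
    rw [this]; exact hω
  · have heq : u - t⁻¹ • (ω - xb) = t⁻¹ • ((xb + t • u) - ω) := by
      have h9 : (xb + t • u) - ω = t • (u - t⁻¹ • (ω - xb)) := by
        rw [smul_sub, smul_inv_smul₀ (ne_of_gt ht0)]; abel
      rw [h9, inv_smul_smul₀ (ne_of_gt ht0)]
    rw [heq, norm_smul, Real.norm_eq_abs, abs_of_pos (inv_pos.2 ht0)]
    calc t⁻¹ * ‖(xb + t • u) - ω‖ ≤ t⁻¹ * (t * (κ * d + ε)) := by
          apply mul_le_mul_of_nonneg_left _ (inv_nonneg.2 ht0.le)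
          rw [← dist_eq_norm]; exact hωd.le
      _ = κ * d + ε := by field_simp

/-- Lemma C : points of Ω near xb have directions close to the cone. -/
lemma lemC (hU : U ∈ 𝓝 xb) (hA : HasFDerivAt f A xb)
    (hrep1 : ∀ x, x ∈ Ω → x ∈ U → f x ∈ Θ)
    {R ε : ℝ} (hR : 0 < R) (hε : 0 < ε) :
    ∀ᶠ t in 𝓝[>] (0:ℝ), ∀ v : X, ‖v‖ ≤ R → xb + t • v ∈ Ω →
      infDist (A v) (cone Θ (f xb)) ≤ ε := by
  set ε₂ : ℝ := ε / R with hε₂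
  have hε₂pos : 0 < ε₂ := by positivity
  obtain ⟨δ₁, hδ₁, hball⟩ := Metric.eventually_nhds_iff.1 (hA.isLittleO.def hε₂pos)
  obtain ⟨δ₂, hδ₂, hballU⟩ := Metric.mem_nhds_iff.1 hU
  have hmem : Ioo (0:ℝ) (min δ₁ δ₂ / R) ∈ 𝓝[>] (0:ℝ) :=
    Ioo_mem_nhdsGT_of_mem ⟨le_rfl, by positivity⟩
  filter_upwards [hmem] with t ht v hvR hvΩ
  obtain ⟨ht0, htlt⟩ := ht
  set a := xb + t • v with ha
  have hdist : dist a xb < min δ₁ δ₂ := by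
    rw [ha, dist_eq_norm]
    have : xb + t • v - xb = t • v := by abel
    rw [this, norm_smul, Real.norm_eq_abs, abs_of_pos ht0]
    calc t * ‖v‖ ≤ t * R := mul_le_mul_of_nonneg_left hvR ht0.le
      _ < min δ₁ δ₂ := by
          rw [← lt_div_iff₀ hR] at *; exact htlt
  have haU : a ∈ U := hballU (mem_ball.2 (hdist.trans_le (min_le_right _ _)))
  have hfa : f a ∈ Θ := hrep1 a hvΩ haU
  have hpC : t⁻¹ • (f a - f xb) ∈ cone Θ (f xb) := by
    refine ⟨t, ht0, ?_⟩
    rw [smul_inv_smul₀ (ne_of_gt ht0)]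
    simpa using hfa
  have hle := infDist_le_dist_of_mem (x := A v) hpC
  have hav : a - xb = t • v := by rw [ha]; abel
  have hkey : dist (A v) (t⁻¹ • (f a - f xb)) = t⁻¹ * ‖f a - f xb - A (a - xb)‖ := by
    rw [dist_eq_norm]
    have : A v - t⁻¹ • (f a - f xb) = -(t⁻¹ • (f a - f xb - A (a - xb))) := by
      rw [hav, map_smul]
      have hne := ne_of_gt ht0
      match_scalars <;> field_simp
    rw [this, norm_neg, norm_smul, Real.norm_eq_abs, abs_of_pos (inv_pos.2 ht0)]
  have hlo : ‖f a - f xb - A (a - xb)‖ ≤ ε₂ * ‖a - xb‖ :=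
    hball (hdist.trans_le (min_le_left _ _))
  calc infDist (A v) (cone Θ (f xb)) ≤ dist (A v) (t⁻¹ • (f a - f xb)) := hle
    _ = t⁻¹ * ‖f a - f xb - A (a - xb)‖ := hkey
    _ ≤ t⁻¹ * (ε₂ * ‖a - xb‖) := mul_le_mul_of_nonneg_left hlo (inv_nonneg.2 ht0.le)
    _ = ε₂ * ‖v‖ := by
        rw [hav, norm_smul, Real.norm_eq_abs, abs_of_pos ht0]
        field_simp
    _ ≤ ε₂ * R := mul_le_mul_of_nonneg_left hvR hε₂pos.le
    _ = ε := by rw [hε₂]; field_simp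

/-- one step of the iteration -/
lemma lemStep (hxb : xb ∈ Ω) (hU : U ∈ 𝓝 xb) (hA : HasFDerivAt f A xb)
    (hΘconv : Convex ℝ Θ) (hfxb : f xb ∈ Θ) (hκ : 0 < κ)
    (hrep1 : ∀ x, x ∈ Ω → x ∈ U → f x ∈ Θ)
    (hsub : ∀ x ∈ U, infDist x Ω ≤ κ * infDist (f x) Θ)
    (w : X) {ε' : ℝ} (hε' : 0 < ε') :
    ∃ w' : X, ‖w - w'‖ ≤ κ * infDist (A w) (cone Θ (f xb)) + ε' ∧
      infDist (A w') (cone Θ (f xb)) ≤ ε' := by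
  set C := cone Θ (f xb) with hC
  set d := infDist (A w) C with hd
  have hd0 : 0 ≤ d := infDist_nonneg
  set R : ℝ := ‖w‖ + κ * d + ε' + 1 with hR
  have hRpos : 0 < R := by positivity
  have hB := lemB hxb hU hA hΘconv hfxb hκ hsub w hε'
  have hCev := lemC hU hA hrep1 hRpos hε'
  obtain ⟨t, htB, htC⟩ := (hB.and hCev).exists
  obtain ⟨v, hvΩ, hvd⟩ := htB
  refine ⟨v, hvd, ?_⟩
  have hvR : ‖v‖ ≤ R := by
    have h2 : ‖v‖ - ‖w‖ ≤ ‖w - v‖ := by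
      rw [norm_sub_rev]; exact norm_sub_norm_le v w
    rw [hR]; linarith
  exact htC v hvR hvΩ

/-- Lemma D : distance estimate for the linearized system. -/
lemma lemD [CompleteSpace X] (hxb : xb ∈ Ω) (hU : U ∈ 𝓝 xb) (hA : HasFDerivAt f A xb)
    (hΘconv : Convex ℝ Θ) (hfxb : f xb ∈ Θ) (hκ : 0 < κ)
    (hrep1 : ∀ x, x ∈ Ω → x ∈ U → f x ∈ Θ)
    (hsub : ∀ x ∈ U, infDist x Ω ≤ κ * infDist (f x) Θ)
    (u : X) :
    infDist u (A ⁻¹' closure (cone Θ (f xb))) ≤ κ * infDist (A u) (cone Θ (f xb)) := by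
  set C := cone Θ (f xb) with hC
  set K := A ⁻¹' closure C with hK
  have hCne : C.Nonempty := ⟨0, zero_mem_cone hfxb⟩
  refine le_of_forall_pos_le_add ?_
  intro ε hε
  set d := infDist (A u) C with hd
  have hd0 : 0 ≤ d := infDist_nonneg
  set ε₀ : ℝ := ε / (3 * (κ + 1)) with hε₀
  have hε₀pos : 0 < ε₀ := by positivity
  set b : ℕ → ℝ := fun n => if n = 0 then d else ε₀ / 2 ^ n with hb
  have hbpos : ∀ n : ℕ, 0 < b (n + 1) := by
    intro n; simp only [hb, Nat.succ_ne_zero, if_false]; positivity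
  have hstep : ∀ (w : X) (n : ℕ), infDist (A w) C ≤ b n →
      ∃ w', ‖w - w'‖ ≤ κ * b n + b (n + 1) ∧ infDist (A w') C ≤ b (n + 1) := by
    intro w n hw
    obtain ⟨w', h1, h2⟩ := lemStep hxb hU hA hΘconv hfxb hκ hrep1 hsub w (hbpos n)
    refine ⟨w', le_trans h1 ?_, h2⟩
    have := mul_le_mul_of_nonneg_left hw hκ.le
    linarith
  choose F hF1 hF2 using hstep
  let g : ∀ _ : ℕ, {w : X // infDist (A w) C ≤ b _} := fun n =>
    Nat.rec (motive := fun n => {w : X // infDist (A w) C ≤ b n})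
      ⟨u, by simp [hb, hd]⟩ (fun n p => ⟨F p.1 n p.2, hF2 p.1 n p.2⟩) n
  set v : ℕ → X := fun n => (g n).1 with hv
  have hv0 : v 0 = u := rfl
  have hvb : ∀ n, infDist (A (v n)) C ≤ b n := fun n => (g n).2
  have hvs : ∀ n, ‖v n - v (n + 1)‖ ≤ κ * b n + b (n + 1) := fun n => hF1 (v n) n (g n).2
  have hterm : ∀ i : ℕ, dist (v i) (v (i + 1)) ≤
      (if i = 0 then κ * d else 0) + (κ + 1) * ε₀ * (1 / 2) ^ i := by
    intro i
    rw [dist_eq_norm]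
    refine (hvs i).trans ?_
    cases i with
    | zero =>
      simp only [hb, if_pos rfl, pow_zero, pow_one]
      norm_num
      nlinarith [hκ.le, hε₀pos.le]
    | succ m =>
      simp only [hb, Nat.succ_ne_zero, if_false, zero_add]
      have e1 : κ * (ε₀ / 2 ^ (m + 1)) + ε₀ / 2 ^ (m + 1 + 1)
          = (κ * ε₀ * 2 + ε₀) / 2 ^ (m + 1 + 1) := by
        rw [pow_succ (2:ℝ) (m + 1)]
        have h2m : ((2:ℝ)) ^ (m + 1) ≠ 0 := by positivity
        field_simp
      have e2 : (κ + 1) * ε₀ * ((1:ℝ) / 2) ^ (m + 1)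
          = ((κ + 1) * ε₀ * 2) / 2 ^ (m + 1 + 1) := by
        rw [div_pow, one_pow, pow_succ (2:ℝ) (m + 1)]
        have h2m : ((2:ℝ)) ^ (m + 1) ≠ 0 := by positivity
        field_simp
      rw [e1, e2]
      gcongr
      nlinarith [hε₀pos.le]
  have hgeo : ∀ n, dist (v n) (v (n + 1)) ≤ (κ * d + (κ + 1) * ε₀) * (1 / 2) ^ n := by
    intro n
    refine (hterm n).trans ?_
    have hpow : (0:ℝ) < (1 / 2 : ℝ) ^ n := by positivity
    have hpow1 : ((1:ℝ) / 2) ^ n ≤ 1 := by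
      apply pow_le_one₀ <;> norm_num
    cases n with
    | zero => simp
    | succ m =>
      simp only [Nat.succ_ne_zero, if_false, zero_add]
      have : 0 ≤ κ * d := mul_nonneg hκ.le hd0
      nlinarith [hpow, this]
  have hcauchy : CauchySeq v := cauchySeq_of_le_geometric (1/2) _ (by norm_num) hgeo
  obtain ⟨w, hw⟩ := cauchySeq_tendsto_of_complete hcauchy
  have hwK : w ∈ K := by
    have htb : Tendsto b atTop (𝓝 0) := by
      apply squeeze_zero (f := b) (g := fun n => (d + ε₀) * (1 / 2) ^ n)
      · intro n; cases n with
        | zero => simpa [hb] using hd0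
        | succ m => simp only [hb, Nat.succ_ne_zero, if_false]; positivity
      · intro n; cases n with
        | zero => simp [hb]; nlinarith [hε₀pos.le]
        | succ m =>
          simp only [hb, Nat.succ_ne_zero, if_false]
          have hq : ((1:ℝ) / 2) ^ (m + 1) = 1 / 2 ^ (m + 1) := by rw [div_pow, one_pow]
          rw [hq]
          rw [mul_one_div, div_le_div_iff₀ (by positivity) (by positivity)]
          nlinarith [hd0, (by positivity : (0:ℝ) < 2 ^ (m + 1))]
      · have := tendsto_pow_atTop_nhds_zero_of_lt_one (r := (1/2:ℝ)) (by norm_num) (by norm_num)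
        simpa using this.const_mul (d + ε₀)
    have hAv : Tendsto (fun n => infDist (A (v n)) C) atTop (𝓝 (infDist (A w) C)) :=
      (((continuous_infDist_pt C).comp A.continuous).tendsto w).comp hw
    have h0 : infDist (A w) C ≤ 0 :=
      le_of_tendsto_of_tendsto hAv htb (Eventually.of_forall hvb)
    exact mem_preimage.2 ((mem_closure_iff_infDist_zero hCne).2
      (le_antisymm h0 infDist_nonneg))
  have hsum : ∀ n, dist (v 0) (v n) ≤ κ * d + ε := by
    intro n
    refine (dist_le_range_sum_dist v n).trans ?_
    have h1 : ∑ i ∈ Finset.range n, dist (v i) (v (i + 1)) ≤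
        ∑ i ∈ Finset.range n, ((if i = 0 then κ * d else 0) + (κ + 1) * ε₀ * (1 / 2) ^ i) :=
      Finset.sum_le_sum (fun i _ => hterm i)
    refine h1.trans ?_
    rw [Finset.sum_add_distrib, ← Finset.mul_sum]
    have h2 : (∑ i ∈ Finset.range n, if i = 0 then κ * d else 0) ≤ κ * d := by
      rw [Finset.sum_ite_eq' (Finset.range n) 0 (fun _ => κ * d)]
      split
      · exact le_rfl
      · exact mul_nonneg hκ.le hd0
    have h3 : (κ + 1) * ε₀ * (∑ i ∈ Finset.range n, ((1:ℝ) / 2) ^ i) ≤ (κ + 1) * ε₀ * 2 :=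
      mul_le_mul_of_nonneg_left (sum_geometric_two_le n) (by positivity)
    have h4 : (κ + 1) * ε₀ * 2 ≤ ε := by
      have hκ1 : κ + 1 ≠ 0 := by positivity
      have : (κ + 1) * ε₀ * 2 = 2 * ε / 3 := by
        rw [hε₀]; field_simp
      rw [this]; linarith
    linarith
  have htend : Tendsto (fun n => dist (v 0) (v n)) atTop (𝓝 (dist (v 0) w)) :=
    tendsto_const_nhds.dist hw
  have hdw : dist u w ≤ κ * d + ε := by
    rw [← hv0]
    exact le_of_tendsto htend (Eventually.of_forall hsum)
  calc infDist u K ≤ dist u w := infDist_le_dist_of_mem hwK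
    _ ≤ κ * d + ε := hdw

/-- contingent tangent cone (local copy matching the problem statement). -/
def tangent (Ω : Set X) (x : X) : Set X :=
  {u | ∃ t : ℕ → ℝ, ∃ v : ℕ → X,
    (∀ k, 0 < t k) ∧ Tendsto t atTop (𝓝 0) ∧ Tendsto v atTop (𝓝 u) ∧
    ∀ k, x + t k • v k ∈ Ω}

/-- the tangent cone equals the linearized cone K -/
lemma lemT (hxb : xb ∈ Ω) (hU : U ∈ 𝓝 xb) (hA : HasFDerivAt f A xb)
    (hΘconv : Convex ℝ Θ) (hfxb : f xb ∈ Θ) (hκ : 0 < κ)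
    (hrep1 : ∀ x, x ∈ Ω → x ∈ U → f x ∈ Θ)
    (hsub : ∀ x ∈ U, infDist x Ω ≤ κ * infDist (f x) Θ) :
    tangent Ω xb = A ⁻¹' closure (cone Θ (f xb)) := by
  set C := cone Θ (f xb) with hC
  have hCne : C.Nonempty := ⟨0, zero_mem_cone hfxb⟩
  apply Subset.antisymm
  · rintro u ⟨t, v, htpos, ht0, hvu, hvΩ⟩
    have htW : Tendsto t atTop (𝓝[>] (0:ℝ)) :=
      tendsto_nhdsWithin_of_tendsto_nhds_of_eventually_within t ht0
        (Eventually.of_forall htpos)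
    have hkey : ∀ ε : ℝ, 0 < ε → infDist (A u) C ≤ ε := by
      intro ε hε
      have hev1 : ∀ᶠ k in atTop, ‖v k‖ ≤ ‖u‖ + 1 := by
        have : ∀ᶠ k in atTop, dist (v k) u < 1 :=
          hvu (Metric.ball_mem_nhds u one_pos)
        filter_upwards [this] with k hk
        have h1 : ‖v k‖ - ‖u‖ ≤ ‖v k - u‖ := norm_sub_norm_le _ _
        rw [← dist_eq_norm] at h1
        linarith
      have hev2 : ∀ᶠ k in atTop, ∀ w : X, ‖w‖ ≤ ‖u‖ + 1 → xb + t k • w ∈ Ω →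
          infDist (A w) C ≤ ε / 2 :=
        htW.eventually (lemC hU hA hrep1 (by positivity) (half_pos hε))
      have hev3 : ∀ᶠ k in atTop, dist (A u) (A (v k)) < ε / 2 := by
        have hAv : Tendsto (fun k => A (v k)) atTop (𝓝 (A u)) :=
          ((A.continuous.tendsto u).comp hvu)
        have := hAv (Metric.ball_mem_nhds (A u) (half_pos hε))
        filter_upwards [this] with k hk
        rw [dist_comm]; exact hk
      obtain ⟨k, h1, h2, h3⟩ := (hev1.and (hev2.and hev3)).exists
      calc infDist (A u) C ≤ infDist (A (v k)) C + dist (A u) (A (v k)) :=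
            infDist_le_infDist_add_dist
        _ ≤ ε / 2 + ε / 2 := add_le_add (h2 (v k) h1 (hvΩ k)) h3.le
        _ = ε := add_halves ε
    have h0 : infDist (A u) C ≤ 0 := by
      refine le_of_forall_pos_le_add ?_
      intro ε hε; simpa using hkey ε hε
    exact mem_preimage.2 ((mem_closure_iff_infDist_zero hCne).2
      (le_antisymm h0 infDist_nonneg))
  · intro u hu
    have hd0 : infDist (A u) C = 0 :=
      (mem_closure_iff_infDist_zero hCne).1 hu
    have hex : ∀ k : ℕ, ∃ t : ℝ, (0 < t ∧ t < 1 / (k + 1)) ∧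
        ∃ v : X, xb + t • v ∈ Ω ∧ ‖u - v‖ ≤ 1 / (k + 1) := by
      intro k
      have hk1 : (0:ℝ) < 1 / (k + 1) := by positivity
      have hB := lemB hxb hU hA hΘconv hfxb hκ hsub u hk1
      have hIoo : Ioo (0:ℝ) (1 / (k + 1)) ∈ 𝓝[>] (0:ℝ) :=
        Ioo_mem_nhdsGT_of_mem ⟨le_rfl, hk1⟩
      obtain ⟨t, htB, ht1, ht2⟩ := ((hB.and (eventually_mem_set.2 hIoo)).exists)
      obtain ⟨v, hv1, hv2⟩ := htB
      refine ⟨t, ⟨ht1, ht2⟩, v, hv1, ?_⟩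
      rw [hd0] at hv2
      simpa using hv2
    choose t ht v hvΩ hvd using hex
    have htpos : ∀ k, 0 < t k := fun k => (ht k).1
    have htlt : ∀ k : ℕ, t k < 1 / (k + 1) := fun k => (ht k).2
    have ht0 : Tendsto t atTop (𝓝 0) := by
      apply squeeze_zero (fun k => (htpos k).le) (fun k => (htlt k).le)
      exact tendsto_one_div_add_atTop_nhds_zero_nat
    have hvu : Tendsto v atTop (𝓝 u) := by
      rw [tendsto_iff_dist_tendsto_zero]
      apply squeeze_zero (fun k => dist_nonneg) (fun k => ?_)
        tendsto_one_div_add_atTop_nhds_zero_nat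
      rw [dist_comm, dist_eq_norm]
      exact hvd k
    exact ⟨t, v, htpos, ht0, hvu, hvΩ⟩

/-- The full limit of the distance difference quotients. -/
lemma lemLim [CompleteSpace X] (hxb : xb ∈ Ω) (hU : U ∈ 𝓝 xb) (hA : HasFDerivAt f A xb)
    (hΘconv : Convex ℝ Θ) (hfxb : f xb ∈ Θ) (hκ : 0 < κ)
    (hrep1 : ∀ x, x ∈ Ω → x ∈ U → f x ∈ Θ)
    (hsub : ∀ x ∈ U, infDist x Ω ≤ κ * infDist (f x) Θ)
    (u : X) :
    Tendsto (fun t : ℝ => t⁻¹ * infDist (xb + t • u) Ω) (𝓝[>] (0:ℝ))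
      (𝓝 (infDist u (A ⁻¹' closure (cone Θ (f xb))))) := by
  set C := cone Θ (f xb) with hC
  set K := A ⁻¹' closure C with hK
  have hCne : C.Nonempty := ⟨0, zero_mem_cone hfxb⟩
  have hKne : K.Nonempty := by
    refine ⟨0, mem_preimage.2 ?_⟩
    rw [map_zero]
    exact subset_closure (zero_mem_cone hfxb)
  have hΩne : Ω.Nonempty := ⟨xb, hxb⟩
  set L := infDist u K with hL
  have hupper : ∀ ε : ℝ, 0 < ε →
      ∀ᶠ t in 𝓝[>] (0:ℝ), t⁻¹ * infDist (xb + t • u) Ω ≤ L + ε := by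
    intro ε hε
    obtain ⟨w, hwK, hwd⟩ := (infDist_lt_iff hKne).1
      (lt_add_of_pos_right L (half_pos hε))
    have hw0 : infDist (A w) C = 0 :=
      (mem_closure_iff_infDist_zero hCne).1 (mem_preimage.1 hwK)
    have hB := lemB hxb hU hA hΘconv hfxb hκ hsub w (half_pos hε)
    filter_upwards [hB, self_mem_nhdsWithin] with t htB ht0
    rw [mem_Ioi] at ht0
    obtain ⟨v, hvΩ, hvd⟩ := htB
    rw [hw0, mul_zero, zero_add] at hvd
    have h2 := infDist_le_dist_of_mem (x := xb + t • u) hvΩ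
    have h3 : dist (xb + t • u) (xb + t • v) = t * ‖u - v‖ := by
      rw [dist_eq_norm]
      have he : xb + t • u - (xb + t • v) = t • (u - v) := by
        rw [smul_sub]; abel
      rw [he, norm_smul, Real.norm_eq_abs, abs_of_pos ht0]
    have h4 : ‖u - v‖ ≤ ‖u - w‖ + ‖w - v‖ := by
      have he : u - v = (u - w) + (w - v) := by abel
      rw [he]; exact norm_add_le _ _
    have h5 : ‖u - w‖ < L + ε / 2 := by rw [← dist_eq_norm]; exact hwd
    have h1 : infDist (xb + t • u) Ω ≤ t * (L + ε) := by
      calc infDist (xb + t • u) Ω ≤ dist (xb + t • u) (xb + t • v) := h2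
        _ = t * ‖u - v‖ := h3
        _ ≤ t * (L + ε) := by nlinarith
    calc t⁻¹ * infDist (xb + t • u) Ω ≤ t⁻¹ * (t * (L + ε)) :=
          mul_le_mul_of_nonneg_left h1 (inv_nonneg.2 ht0.le)
      _ = L + ε := by field_simp
  have hlower : ∀ ε : ℝ, 0 < ε →
      ∀ᶠ t in 𝓝[>] (0:ℝ), L - ε ≤ t⁻¹ * infDist (xb + t • u) Ω := by
    intro ε hε
    set ε₃ : ℝ := min 1 (ε / 4) with hε₃def
    have hε₃ : 0 < ε₃ := lt_min one_pos (by positivity)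
    have hε₃1 : ε₃ ≤ 1 := min_le_left _ _
    have hε₃2 : ε₃ ≤ ε / 4 := min_le_right _ _
    set εC : ℝ := ε / (2 * κ) with hεCdef
    have hεC : 0 < εC := by positivity
    have hCev := lemC (Ω := Ω) hU hA hrep1 (R := ‖u‖ + ‖u‖ + 1) (by positivity) hεC
    filter_upwards [hCev, self_mem_nhdsWithin] with t htC ht0
    rw [mem_Ioi] at ht0
    set q := t⁻¹ * infDist (xb + t • u) Ω with hq
    have hq0 : 0 ≤ q := mul_nonneg (inv_nonneg.2 ht0.le) infDist_nonneg
    have hqu : q ≤ ‖u‖ := by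
      have h1 := infDist_le_dist_of_mem (x := xb + t • u) hxb
      have h2 : dist (xb + t • u) xb = t * ‖u‖ := by
        rw [dist_eq_norm]
        have he : xb + t • u - xb = t • u := by abel
        rw [he, norm_smul, Real.norm_eq_abs, abs_of_pos ht0]
      rw [hq]
      calc t⁻¹ * infDist (xb + t • u) Ω ≤ t⁻¹ * (t * ‖u‖) := by
            rw [← h2]; exact mul_le_mul_of_nonneg_left h1 (inv_nonneg.2 ht0.le)
        _ = ‖u‖ := by field_simp
    have heqtq : infDist (xb + t • u) Ω = t * q := by
      rw [hq]; field_simp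
    have hlt : infDist (xb + t • u) Ω < t * (q + ε₃) := by
      rw [heqtq]; nlinarith
    obtain ⟨ω, hωΩ, hωd⟩ := (infDist_lt_iff hΩne).1 hlt
    set v := t⁻¹ • (ω - xb) with hv
    have hωv : xb + t • v = ω := by
      rw [hv, smul_inv_smul₀ (ne_of_gt ht0)]; abel
    have huv : ‖u - v‖ < q + ε₃ := by
      have heq2 : u - v = t⁻¹ • ((xb + t • u) - ω) := by
        have h9 : (xb + t • u) - ω = t • (u - v) := by
          rw [hv, smul_sub, smul_inv_smul₀ (ne_of_gt ht0)]; abel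
        rw [h9, inv_smul_smul₀ (ne_of_gt ht0)]
      rw [heq2, norm_smul, Real.norm_eq_abs, abs_of_pos (inv_pos.2 ht0)]
      rw [← dist_eq_norm] at *
      calc t⁻¹ * dist (xb + t • u) ω < t⁻¹ * (t * (q + ε₃)) := by
            apply (mul_lt_mul_iff_right₀ (inv_pos.2 ht0)).2 hωd
        _ = q + ε₃ := by field_simp
    have hvn : ‖v‖ ≤ ‖u‖ + ‖u‖ + 1 := by
      have h2 : ‖v‖ - ‖u‖ ≤ ‖u - v‖ := by
        rw [norm_sub_rev]
        exact norm_sub_norm_le v u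
      linarith
    have hvC : infDist (A v) C ≤ εC := htC v hvn (hωv.symm ▸ hωΩ)
    have hvK : infDist v K ≤ κ * εC := by
      refine le_trans (lemD hxb hU hA hΘconv hfxb hκ hrep1 hsub v) ?_
      exact mul_le_mul_of_nonneg_left hvC hκ.le
    have hκε : κ * εC = ε / 2 := by
      rw [hεCdef]; field_simp
    have hfin : L ≤ q + ε := by
      calc L ≤ infDist v K + dist u v := infDist_le_infDist_add_dist
        _ ≤ ε / 2 + (q + ε₃) := by
            refine add_le_add (hvK.trans_eq hκε) ?_
            rw [dist_eq_norm]; exact huv.le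
        _ ≤ q + ε := by linarith
    linarith
  rw [Metric.tendsto_nhds]
  intro ε hε
  filter_upwards [hupper (ε/2) (half_pos hε), hlower (ε/2) (half_pos hε)] with t h1 h2
  rw [Real.dist_eq, abs_lt]
  constructor <;> linarith

end Main
end Aux12

/-- generalized differentiation of the distance function to a set
subamenable at `xb` (with subamenability data `Y, f, Θ, κ, U`) in a reflexive
Banach space, together with epi-differentiability and the full-limit formula. -/
theorem distance_function_subamenable
    {X Y : Type*} [NormedAddCommGroup X] [NormedSpace ℝ X] [CompleteSpace X]
    [NormedAddCommGroup Y] [NormedSpace ℝ Y]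
    (hrefl : Function.Surjective ⇑(NormedSpace.inclusionInDoubleDual ℝ X))
    (Ω : Set X) (xb : X) (hxb : xb ∈ Ω) (hΩcl : IsClosed Ω)
    (f : X → Y) (Θ : Set Y) (κ : ℝ) (U : Set X)
    (hU : U ∈ 𝓝 xb) (hf : ContDiffAt ℝ 1 f xb)
    (hΘcl : IsClosed Θ) (hΘconv : Convex ℝ Θ) (hfxb : f xb ∈ Θ) (hκ : 0 < κ)
    (hrep : Ω ∩ U = {x ∈ U | f x ∈ Θ})
    (hsub : ∀ x ∈ U, infDist x Ω ≤ κ * infDist (f x) Θ) :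
    (∀ u : X, subDeriv (fun x => ((infDist x Ω : ℝ) : EReal)) xb u =
      ((infDist u (contTangent Ω xb) : ℝ) : EReal)) ∧
    subDiff (fun x => ((infDist x Ω : ℝ) : EReal)) xb =
      subNormal Ω xb ∩ {v : X →L[ℝ] ℝ | ‖v‖ ≤ 1} ∧
    epiDiffAt (fun x => ((infDist x Ω : ℝ) : EReal)) xb ∧
    ∀ u : X, Tendsto (fun t : ℝ => t⁻¹ * (infDist (xb + t • u) Ω - infDist xb Ω))
      (𝓝[>] (0:ℝ)) (𝓝 (infDist u (contTangent Ω xb))) := by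
  classical
  -- setup
  set A := fderiv ℝ f xb with hAdef
  have hA : HasFDerivAt f A xb := (hf.hasStrictFDerivAt one_ne_zero).hasFDerivAt
  have hrep1 : ∀ x, x ∈ Ω → x ∈ U → f x ∈ Θ := by
    intro x h1 h2
    have hx : x ∈ Ω ∩ U := ⟨h1, h2⟩
    rw [hrep] at hx
    exact hx.2
  set T := contTangent Ω xb with hTdef
  have hT : T = A ⁻¹' closure (Aux12.cone Θ (f xb)) :=
    Aux12.lemT hxb hU hA hΘconv hfxb hκ hrep1 hsub
  have hT0 : (0 : X) ∈ T := by
    rw [hT]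
    exact mem_preimage.2 (by rw [map_zero]; exact subset_closure (Aux12.zero_mem_cone hfxb))
  have hTne : T.Nonempty := ⟨0, hT0⟩
  have hlimT : ∀ u : X, Tendsto (fun t : ℝ => t⁻¹ * infDist (xb + t • u) Ω)
      (𝓝[>] (0:ℝ)) (𝓝 (infDist u T)) := by
    intro u
    rw [hT]
    exact Aux12.lemLim hxb hU hA hΘconv hfxb hκ hrep1 hsub u
  have hφ0 : infDist xb Ω = 0 := infDist_zero_of_mem hxb
  have hdq : ∀ (t : ℝ) (w : X),
      diffQuot (fun x => ((infDist x Ω : ℝ) : EReal)) xb t w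
        = (((t⁻¹ * infDist (xb + t • w) Ω : ℝ)) : EReal) := by
    intro t w
    simp only [diffQuot, hφ0, EReal.coe_zero, sub_zero, ← EReal.coe_mul]
  -- 1-Lipschitz property of difference quotients in the direction
  have hlip : ∀ t : ℝ, 0 < t → ∀ a b : X,
      dist (t⁻¹ * infDist (xb + t • a) Ω) (t⁻¹ * infDist (xb + t • b) Ω) ≤ dist a b := by
    intro t ht a b
    rw [Real.dist_eq, ← mul_sub, abs_mul, abs_of_pos (inv_pos.2 ht)]
    have habs : |infDist (xb + t • a) Ω - infDist (xb + t • b) Ω|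
        ≤ dist (xb + t • a) (xb + t • b) := by
      rw [abs_sub_le_iff]
      constructor
      · have := infDist_le_infDist_add_dist (x := xb + t • a) (y := xb + t • b) (s := Ω)
        linarith
      · have := infDist_le_infDist_add_dist (x := xb + t • b) (y := xb + t • a) (s := Ω)
        rw [dist_comm] at this
        linarith
    have hda : dist (xb + t • a) (xb + t • b) = t * dist a b := by
      rw [dist_eq_norm, dist_eq_norm]
      have he : xb + t • a - (xb + t • b) = t • (a - b) := by
        rw [smul_sub]; abel
      rw [he, norm_smul, Real.norm_eq_abs, abs_of_pos ht]
    calc t⁻¹ * |infDist (xb + t • a) Ω - infDist (xb + t • b) Ω|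
        ≤ t⁻¹ * (t * dist a b) := by
          exact mul_le_mul_of_nonneg_left (habs.trans_eq hda) (inv_nonneg.2 ht.le)
      _ = dist a b := by field_simp
  -- full limit along the product filter
  have hprod : ∀ u : X, Tendsto (fun p : ℝ × X => p.1⁻¹ * infDist (xb + p.1 • p.2) Ω)
      ((𝓝[>] (0:ℝ)) ×ˢ 𝓝 u) (𝓝 (infDist u T)) := by
    intro u
    rw [Metric.tendsto_nhds]
    intro ε hε
    have h1 := (Metric.tendsto_nhds.1 (hlimT u)) (ε/2) (by positivity)
    have hev : (ball u (ε/2) : Set X) ∈ 𝓝 u := ball_mem_nhds u (by positivity)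
    filter_upwards [Filter.prod_mem_prod (h1.and self_mem_nhdsWithin) hev] with p hp
    obtain ⟨⟨hp1, hp2⟩, hp3⟩ := hp
    replace hp2 : (0:ℝ) < p.1 := hp2
    replace hp3 : dist p.2 u < ε / 2 := hp3
    calc dist (p.1⁻¹ * infDist (xb + p.1 • p.2) Ω) (infDist u T)
        ≤ dist (p.1⁻¹ * infDist (xb + p.1 • p.2) Ω) (p.1⁻¹ * infDist (xb + p.1 • u) Ω)
          + dist (p.1⁻¹ * infDist (xb + p.1 • u) Ω) (infDist u T) := dist_triangle _ _ _
      _ < ε/2 + ε/2 := add_lt_add_of_le_of_lt ((hlip p.1 hp2 p.2 u).trans hp3.le) hp1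
      _ = ε := add_halves ε
  -- Part 1
  have part1 : ∀ u : X, subDeriv (fun x => ((infDist x Ω : ℝ) : EReal)) xb u
      = ((infDist u T : ℝ) : EReal) := by
    intro u
    rw [subDeriv]
    have he : (fun p : ℝ × X => diffQuot (fun x => ((infDist x Ω : ℝ) : EReal)) xb p.1 p.2)
        = fun p : ℝ × X => (((p.1⁻¹ * infDist (xb + p.1 • p.2) Ω : ℝ)) : EReal) :=
      funext fun p => hdq p.1 p.2
    rw [he]
    exact Tendsto.liminf_eq (EReal.tendsto_coe.2 (hprod u))
  refine ⟨part1, ?_, ?_, ?_⟩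
  · -- Part 2 : subdifferential formula
    ext v
    simp only [subDiff, subNormal, Set.mem_setOf_eq, Set.mem_inter_iff]
    constructor
    · intro h
      have h' : ∀ u, v u ≤ infDist u T := by
        intro u
        have hh := h u
        rw [part1 u] at hh
        exact EReal.coe_le_coe_iff.1 hh
      refine ⟨fun u huT => ?_, ?_⟩
      · have hh := h' u
        rwa [infDist_zero_of_mem huT] at hh
      · refine v.opNorm_le_bound zero_le_one fun u => ?_
        rw [one_mul]
        have hb1 : ∀ w : X, v w ≤ ‖w‖ := by
          intro w
          refine (h' w).trans ?_
          have := infDist_le_dist_of_mem (x := w) hT0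
          simpa [dist_eq_norm] using this
        have h1 := hb1 u
        have h2 := hb1 (-u)
        rw [map_neg, norm_neg] at h2
        rw [Real.norm_eq_abs, abs_le]
        constructor <;> linarith
    · rintro ⟨hN, hnorm⟩ u
      rw [part1 u, EReal.coe_le_coe_iff]
      by_contra hcon
      push_neg at hcon
      obtain ⟨w, hwT, hwd⟩ := (infDist_lt_iff hTne).1 hcon
      have h1 : v u - v w ≤ ‖v‖ * ‖u - w‖ := by
        calc v u - v w = v (u - w) := (map_sub v u w).symm
          _ ≤ |v (u - w)| := le_abs_self _
          _ ≤ ‖v‖ * ‖u - w‖ := by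
              rw [← Real.norm_eq_abs]; exact v.le_opNorm _
      have h2 : ‖v‖ * ‖u - w‖ ≤ ‖u - w‖ := by
        have hnn : (0:ℝ) ≤ ‖u - w‖ := norm_nonneg _
        nlinarith
      have h3 : v w ≤ 0 := hN w hwT
      have h4 : dist u w = ‖u - w‖ := dist_eq_norm u w
      rw [h4] at hwd
      linarith
  · -- Part 3 : epi-differentiability
    have hepiS : ∀ (t : ℝ) (p : X × ℝ),
        p ∈ epiSet (fun w => diffQuot (fun x => ((infDist x Ω : ℝ) : EReal)) xb t w) ↔
          t⁻¹ * infDist (xb + t • p.1) Ω ≤ p.2 := by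
      intro t p
      rw [epiSet, mem_setOf_eq, hdq, EReal.coe_le_coe_iff]
    have hepiD : ∀ p : X × ℝ,
        p ∈ epiSet (subDeriv (fun x => ((infDist x Ω : ℝ) : EReal)) xb) ↔
          infDist p.1 T ≤ p.2 := by
      intro p
      rw [epiSet, mem_setOf_eq, part1 p.1, EReal.coe_le_coe_iff]
    have houter : ∀ (u : X) (r : ℝ) (t : ℕ → ℝ) (w : ℕ → X × ℝ), (∀ k, 0 < t k) →
        Tendsto t atTop (𝓝 0) → Tendsto w atTop (𝓝 (u, r)) →
        (∀ᶠ k in atTop, (t k)⁻¹ * infDist (xb + t k • (w k).1) Ω ≤ (w k).2) →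
        infDist u T ≤ r := by
      intro u r t w htpos ht0 hwz hmem
      have htW : Tendsto t atTop (𝓝[>] (0:ℝ)) :=
        tendsto_nhdsWithin_of_tendsto_nhds_of_eventually_within t ht0
          (Eventually.of_forall htpos)
      have hqt : Tendsto (fun k => (t k)⁻¹ * infDist (xb + t k • u) Ω) atTop
          (𝓝 (infDist u T)) := (hlimT u).comp htW
      have hw1 : Tendsto (fun k => (w k).1) atTop (𝓝 u) :=
        (continuous_fst.tendsto _).comp hwz
      have hw2 : Tendsto (fun k => (w k).2) atTop (𝓝 r) :=
        (continuous_snd.tendsto _).comp hwz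
      have hnrm : Tendsto (fun k => dist ((w k).1) u) atTop (𝓝 0) :=
        tendsto_iff_dist_tendsto_zero.1 hw1
      have hleft : Tendsto (fun k => (t k)⁻¹ * infDist (xb + t k • u) Ω - dist ((w k).1) u)
          atTop (𝓝 (infDist u T)) := by
        have := hqt.sub hnrm
        simpa using this
      refine le_of_tendsto_of_tendsto hleft hw2 ?_
      filter_upwards [hmem] with k hk
      have hl := hlip (t k) (htpos k) ((w k).1) u
      rw [Real.dist_eq] at hl
      have hl2 := (abs_le.1 hl).1
      linarith
    have happrox : ∀ (u : X) (r : ℝ), infDist u T ≤ r → ∀ (t : ℕ → ℝ), (∀ k, 0 < t k) →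
        Tendsto t atTop (𝓝 0) →
        Tendsto (fun k => ((u, max r ((t k)⁻¹ * infDist (xb + t k • u) Ω)) : X × ℝ))
          atTop (𝓝 (u, r)) := by
      intro u r hur t htpos ht0
      have htW : Tendsto t atTop (𝓝[>] (0:ℝ)) :=
        tendsto_nhdsWithin_of_tendsto_nhds_of_eventually_within t ht0
          (Eventually.of_forall htpos)
      have hqt : Tendsto (fun k => (t k)⁻¹ * infDist (xb + t k • u) Ω) atTop
          (𝓝 (infDist u T)) := (hlimT u).comp htW
      have hmax : Tendsto (fun k => max r ((t k)⁻¹ * infDist (xb + t k • u) Ω)) atTop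
          (𝓝 r) := by
        have hm := Tendsto.max (tendsto_const_nhds (x := r) (f := atTop)) hqt
        rwa [max_eq_left hur] at hm
      exact Tendsto.prodMk_nhds tendsto_const_nhds hmax
    constructor
    · apply Subset.antisymm
      · rintro ⟨u, r⟩ ⟨t, w, htpos, ht0, hwz, hmem⟩
        rw [hepiD]
        exact houter u r t w htpos ht0 hwz
          (Eventually.of_forall fun k => (hepiS (t k) (w k)).1 (hmem k))
      · rintro ⟨u, r⟩ hz
        rw [hepiD] at hz
        exact ⟨fun k => 1/((k:ℝ)+1),
          fun k => (u, max r ((1/((k:ℝ)+1))⁻¹ * infDist (xb + (1/((k:ℝ)+1)) • u) Ω)),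
          fun k => by positivity, tendsto_one_div_add_atTop_nhds_zero_nat,
          happrox u r hz _ (fun k => by positivity) tendsto_one_div_add_atTop_nhds_zero_nat,
          fun k => (hepiS _ _).2 (le_max_right _ _)⟩
    · apply Subset.antisymm
      · rintro ⟨u, r⟩ hz
        obtain ⟨w, hwz, hmem⟩ := hz (fun k => 1/((k:ℝ)+1)) (fun k => by positivity)
          tendsto_one_div_add_atTop_nhds_zero_nat
        rw [hepiD]
        exact houter u r _ w (fun k => by positivity)
          tendsto_one_div_add_atTop_nhds_zero_nat hwz
          (hmem.mono fun k hk => (hepiS _ _).1 hk)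
      · rintro ⟨u, r⟩ hz t htpos ht0
        rw [hepiD] at hz
        exact ⟨fun k => (u, max r ((t k)⁻¹ * infDist (xb + t k • u) Ω)),
          happrox u r hz t htpos ht0,
          Eventually.of_forall fun k => (hepiS _ _).2 (le_max_right _ _)⟩
  · -- Part 4 : full limit
    intro u
    have he : (fun t : ℝ => t⁻¹ * (infDist (xb + t • u) Ω - infDist xb Ω))
        = fun t : ℝ => t⁻¹ * infDist (xb + t • u) Ω := by
      funext t; rw [hφ0, sub_zero]
    rw [he]
    exact hlimT u
end
end

section
/- Let X be a reflexive Banach space and let Ω ⊂ X be subamenable at x̄ ∈ Ω. Then the Dini–Hadamard subnormal cone is robust at x̄: N⁻_Ω(x̄) = {v ∈ X* : there exist sequences x_k ∈ Ω with x_k → x̄ and v_k ∈ N⁻_Ω(x_k) with v_k converging to v in the weak* topology of X*}. -/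
open Filter Topology Set Metric Pointwise

noncomputable section

variable {E : Type*} [NormedAddCommGroup E] [NormedSpace ℝ E]

set_option maxHeartbeats 1000000000


theorem exists_weak_cluster {X : Type*} [NormedAddCommGroup X] [NormedSpace ℝ X]
    (hrefl : Function.Surjective ⇑(NormedSpace.inclusionInDoubleDual ℝ X))
    (w : ℕ → X) (R : ℝ) (hbd : ∀ n, ‖w n‖ ≤ R) :
    ∃ p : X, ∀ (g : X →L[ℝ] ℝ) (r : ℝ), (∀ᶠ n in atTop, g (w n) ≤ r) → g p ≤ r := by
  set ι := NormedSpace.inclusionInDoubleDual ℝ X with hι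
  let W : ℕ → WeakDual ℝ (StrongDual ℝ X) := fun n => ι (w n)
  set K : Set (WeakDual ℝ (StrongDual ℝ X)) :=
    WeakDual.toStrongDual ⁻¹' closedBall (0 : StrongDual ℝ (StrongDual ℝ X)) R
    with hKdef
  have hK : IsCompact K := WeakDual.isCompact_closedBall (0 : StrongDual ℝ (StrongDual ℝ X)) R
  have hWK : ∀ n, W n ∈ K := by
    intro n
    simp only [hKdef, mem_preimage, mem_closedBall, dist_zero_right]
    exact le_trans (le_of_eq (dist_zero_right (WeakDual.toStrongDual (W n) : StrongDual ℝ (StrongDual ℝ X)))) (le_trans (NormedSpace.double_dual_bound ℝ X (w n)) (hbd n))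
  have hNB : (map W atTop).NeBot := map_neBot
  obtain ⟨Winf, -, hcl⟩ := hK.exists_clusterPt (f := map W atTop)
    (le_principal_iff.mpr (mem_map.mpr (by filter_upwards with n using hWK n)))
  obtain ⟨p, hp⟩ := hrefl (WeakDual.toStrongDual Winf)
  refine ⟨p, fun g r h => ?_⟩
  have hcont : Continuous fun Φ : WeakDual ℝ (StrongDual ℝ X) => Φ g :=
    WeakDual.eval_continuous g
  have hclW : MapClusterPt Winf atTop W := hcl
  have hclg : MapClusterPt (Winf g) atTop (fun n => W n g) :=
    hclW.continuousAt_comp hcont.continuousAt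
  have hgp : g p = Winf g := by
    have h1 : ι p g = g p := rfl
    rw [← h1, hp]; rfl
  rw [hgp]
  have hev : {x : ℝ | x ≤ r} ∈ map (fun n => W n g) atTop := by
    rw [mem_map]
    filter_upwards [h] with n hn using hn
  have hmem : Winf g ∈ closure (Iic r) :=
    mem_closure_iff_clusterPt.mpr (hclg.clusterPt.mono (le_principal_iff.mpr hev))
  simpa [isClosed_Iic.closure_eq] using hmem


theorem cone_convex {Y : Type*} [NormedAddCommGroup Y] [NormedSpace ℝ Y]
    {Θ : Set Y} (hΘconv : Convex ℝ Θ) (p0 : Y) :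
    Convex ℝ {y : Y | ∃ l : ℝ, 0 ≤ l ∧ ∃ z ∈ Θ, y = l • (z - p0)} := by
  rintro y1 ⟨l1, hl1, z1, hz1, rfl⟩ y2 ⟨l2, hl2, z2, hz2, rfl⟩ a b ha hb hab
  rcases eq_or_lt_of_le (by positivity : (0:ℝ) ≤ a * l1 + b * l2) with hμ | hμ
  · refine ⟨0, le_rfl, z1, hz1, ?_⟩
    have h1 : a * l1 = 0 := by nlinarith [mul_nonneg ha hl1, mul_nonneg hb hl2]
    have h2 : b * l2 = 0 := by nlinarith [mul_nonneg ha hl1, mul_nonneg hb hl2]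
    rw [smul_smul, smul_smul, h1, h2]
    simp
  · set μ := a * l1 + b * l2 with hμdef
    refine ⟨μ, le_of_lt hμ, (a * l1 / μ) • z1 + (b * l2 / μ) • z2,
      hΘconv hz1 hz2 (by positivity) (by positivity) (by field_simp; exact hμdef.symm), ?_⟩
    have hμne : μ ≠ 0 := ne_of_gt hμ
    have e1 : μ * (a * l1 / μ) = a * l1 := by field_simp
    have e2 : μ * (b * l2 / μ) = b * l2 := by field_simp
    have e3 : μ • ((a * l1 / μ) • z1 + (b * l2 / μ) • z2 - p0)
        = (a * l1) • z1 + (b * l2) • z2 - μ • p0 := by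
      rw [smul_sub, smul_add, smul_smul, smul_smul, e1, e2]
    rw [e3, hμdef]
    module
 
theorem mem_closure_cone_of_forall_polar {Y : Type*} [NormedAddCommGroup Y] [NormedSpace ℝ Y]
    {Θ : Set Y} (hΘconv : Convex ℝ Θ) {p0 : Y} (hp0 : p0 ∈ Θ) (q : Y)
    (h : ∀ g : Y →L[ℝ] ℝ,
      (∀ y ∈ {y : Y | ∃ l : ℝ, 0 ≤ l ∧ ∃ z ∈ Θ, y = l • (z - p0)}, g y ≤ 0) → g q ≤ 0) :
    q ∈ closure {y : Y | ∃ l : ℝ, 0 ≤ l ∧ ∃ z ∈ Θ, y = l • (z - p0)} := by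
  set C := {y : Y | ∃ l : ℝ, 0 ≤ l ∧ ∃ z ∈ Θ, y = l • (z - p0)} with hC
  by_contra hq
  obtain ⟨g, s, hgs, hsq⟩ :=
    geometric_hahn_banach_closed_point ((cone_convex hΘconv p0).closure) isClosed_closure hq
  have h0C : (0 : Y) ∈ C := ⟨0, le_rfl, p0, hp0, by simp⟩
  have h0 : (0 : ℝ) < s := by
    have := hgs 0 (subset_closure h0C)
    simpa using this
  have hneg : ∀ y ∈ C, g y ≤ 0 := by
    rintro y ⟨l, hl, z, hz, rfl⟩
    by_contra hpos
    push_neg at hpos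
    have hscale : ((s + 1) / g (l • (z - p0))) • (l • (z - p0)) ∈ C := by
      refine ⟨(s + 1) / g (l • (z - p0)) * l, by positivity, z, hz, by rw [smul_smul]⟩
    have := hgs _ (subset_closure hscale)
    rw [map_smul] at this
    have hne : g (l • (z - p0)) ≠ 0 := ne_of_gt hpos
    rw [smul_eq_mul, div_mul_cancel₀ _ hne] at this
    linarith
  linarith [h g hneg, hsq]




theorem small_s_event (c : ℝ) (hc : 0 < c) : ∀ᶠ s in 𝓝[>] (0:ℝ), s ≤ c := by
  filter_upwards [Ioo_mem_nhdsGT_of_mem (by constructor <;> [exact le_rfl; exact hc] :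
    (0:ℝ) ∈ Ico 0 c)] with s hs using le_of_lt hs.2

theorem le_of_forall_nat_le {a b c : ℝ} (hc : 0 ≤ c)
    (h : ∀ m : ℕ, a ≤ b + c / ((m : ℝ) + 1)) : a ≤ b := by
  refine _root_.le_of_forall_pos_le_add fun η hη => ?_
  obtain ⟨m, hm⟩ := exists_nat_gt (c / η)
  have h2 : c / ((m : ℝ) + 1) ≤ η := by
    rw [div_le_iff₀ (by positivity)]
    rw [div_lt_iff₀ hη] at hm
    nlinarith [hm.le]
  linarith [h m]

theorem mem_contTangent_aux {X Y : Type*} [NormedAddCommGroup X] [NormedSpace ℝ X]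
    [NormedAddCommGroup Y] [NormedSpace ℝ Y]
    (Ω : Set X) (hΩne : Ω.Nonempty)
    (f : X → Y) (Θ : Set Y) (κ : ℝ) (hκ : 0 < κ) (U : Set X)
    (hΘconv : Convex ℝ Θ)
    (hsub : ∀ x ∈ U, infDist x Ω ≤ κ * infDist (f x) Θ)
    (x0 : X) (hx0 : x0 ∈ Ω) (hfx0 : f x0 ∈ Θ)
    (hU0 : ∀ᶠ h in 𝓝 (0 : X), x0 + h ∈ U)
    (A0 : X →L[ℝ] Y) (hd : HasFDerivAt f A0 x0)
    (p : X)
    (hp : A0 p ∈ closure {y : Y | ∃ l : ℝ, 0 ≤ l ∧ ∃ z ∈ Θ, y = l • (z - f x0)}) :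
    p ∈ contTangent Ω x0 := by
  have key : ∀ i : ℕ, ∃ σ : ℝ, 0 < σ ∧ σ ≤ 1 / ((i : ℝ) + 1) ∧ ∃ q ∈ Ω,
      dist (x0 + σ • p) q ≤ σ * ((2 * κ + 1) * (1 / ((i : ℝ) + 1))) := by
    intro i
    set ε := 1 / ((i : ℝ) + 1) with hε
    have hεpos : 0 < ε := by positivity
    obtain ⟨c, hcC, hcnear⟩ : ∃ c ∈ {y : Y | ∃ l : ℝ, 0 ≤ l ∧ ∃ z ∈ Θ, y = l • (z - f x0)},
        dist (A0 p) c < ε := Metric.mem_closure_iff.mp hp ε hεpos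
    obtain ⟨l, hl, z, hz, rfl⟩ := hcC
    rw [dist_eq_norm] at hcnear
    -- eventual conditions
    have hlo := hasFDerivAt_iff_isLittleO_nhds_zero.mp hd
    have htend : Tendsto (fun σ : ℝ => σ • p) (𝓝[>] 0) (𝓝 (0 : X)) := by
      have h1 : Tendsto (fun σ : ℝ => σ • p) (𝓝 0) (𝓝 ((0:ℝ) • p)) :=
        (tendsto_id.smul_const p)
      rw [zero_smul] at h1
      exact h1.mono_left nhdsWithin_le_nhds
    have h1 : ∀ᶠ σ in 𝓝[>] (0:ℝ),
        ‖f (x0 + σ • p) - f x0 - A0 (σ • p)‖ ≤ ε / (‖p‖ + 1) * ‖σ • p‖ :=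
      htend.eventually (hlo.def (by positivity))
    have h2 : ∀ᶠ σ in 𝓝[>] (0:ℝ), σ * l ≤ 1 := by
      filter_upwards [small_s_event (1 / (l + 1)) (by positivity),
        self_mem_nhdsWithin] with σ hσ hσpos
      have hσ' : σ * (l + 1) ≤ 1 := (le_div_iff₀ (by positivity)).mp hσ
      have : (0:ℝ) < σ := hσpos
      nlinarith
    have h3 : ∀ᶠ σ in 𝓝[>] (0:ℝ), x0 + σ • p ∈ U := htend.eventually hU0
    have h4 : ∀ᶠ σ in 𝓝[>] (0:ℝ), σ ≤ ε := small_s_event ε hεpos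
    have h5 : ∀ᶠ σ in 𝓝[>] (0:ℝ), 0 < σ := self_mem_nhdsWithin
    obtain ⟨σ, hσlo, hσl, hσU, hσε, hσpos⟩ := (h1.and (h2.and (h3.and (h4.and h5)))).exists
    -- the convex combination point
    have hθ : f x0 + (σ * l) • (z - f x0) ∈ Θ := by
      have hmem := hΘconv hfx0 hz (a := 1 - σ * l) (b := σ * l)
        (by linarith) (by positivity) (by ring)
      have hrw : (1 - σ * l) • f x0 + (σ * l) • z = f x0 + (σ * l) • (z - f x0) := by
        module
      rwa [hrw] at hmem
    have hid : f x0 + σ • A0 p - (f x0 + (σ * l) • (z - f x0))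
        = σ • (A0 p - l • (z - f x0)) := by module
    have hdistΘ : infDist (f (x0 + σ • p)) Θ ≤ σ * ε + σ * ε := by
      have hle := infDist_le_dist_of_mem (x := f (x0 + σ • p)) hθ
      have htri : dist (f (x0 + σ • p)) (f x0 + (σ * l) • (z - f x0))
          ≤ ‖f (x0 + σ • p) - f x0 - A0 (σ • p)‖ + ‖σ • (A0 p - l • (z - f x0))‖ := by
        rw [dist_eq_norm]
        calc ‖f (x0 + σ • p) - (f x0 + (σ * l) • (z - f x0))‖
            = ‖(f (x0 + σ • p) - f x0 - A0 (σ • p))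
              + (f x0 + σ • A0 p - (f x0 + (σ * l) • (z - f x0)))‖ := by
              rw [map_smul]; congr 1; module
          _ ≤ _ := by rw [hid]; exact norm_add_le _ _
      have h1' : ‖f (x0 + σ • p) - f x0 - A0 (σ • p)‖ ≤ σ * ε := by
        refine hσlo.trans ?_
        rw [norm_smul, Real.norm_eq_abs, abs_of_pos hσpos]
        rw [div_mul_eq_mul_div, div_le_iff₀ (by positivity)]
        nlinarith [norm_nonneg p, hεpos.le]
      have h2' : ‖σ • (A0 p - l • (z - f x0))‖ ≤ σ * ε := by
        rw [norm_smul, Real.norm_eq_abs, abs_of_pos hσpos]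
        nlinarith [hcnear.le]
      linarith [hle, htri]
    have hinfΩ : infDist (x0 + σ • p) Ω < σ * ((2 * κ + 1) * ε) := by
      have := (hsub _ hσU).trans (mul_le_mul_of_nonneg_left hdistΘ hκ.le)
      nlinarith [hεpos, hσpos]
    obtain ⟨q, hqΩ, hqd⟩ := (infDist_lt_iff hΩne).mp hinfΩ
    exact ⟨σ, hσpos, hσε, q, hqΩ, hqd.le⟩
  choose σ hσpos hσle q hqΩ hqd using key
  refine ⟨σ, fun i => (σ i)⁻¹ • (q i - x0), hσpos, ?_, ?_, ?_⟩
  · exact squeeze_zero (fun i => (hσpos i).le) hσle tendsto_one_div_add_atTop_nhds_zero_nat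
  · have hbound : ∀ i : ℕ, ‖(σ i)⁻¹ • (q i - x0) - p‖ ≤ (2 * κ + 1) * (1 / ((i:ℝ) + 1)) := by
      intro i
      have hidv : (σ i)⁻¹ • (q i - x0) - p = (σ i)⁻¹ • (q i - (x0 + σ i • p)) := by
        rw [smul_sub, smul_sub, smul_add, smul_smul, inv_mul_cancel₀ (hσpos i).ne', one_smul]
        abel
      rw [hidv, norm_smul, Real.norm_eq_abs, abs_of_pos (inv_pos.mpr (hσpos i))]
      have : ‖q i - (x0 + σ i • p)‖ ≤ σ i * ((2 * κ + 1) * (1 / ((i:ℝ) + 1))) := by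
        rw [← dist_eq_norm, dist_comm]
        exact hqd i
      calc (σ i)⁻¹ * ‖q i - (x0 + σ i • p)‖
          ≤ (σ i)⁻¹ * (σ i * ((2 * κ + 1) * (1 / ((i:ℝ) + 1)))) :=
            mul_le_mul_of_nonneg_left this (inv_pos.mpr (hσpos i)).le
        _ = (2 * κ + 1) * (1 / ((i:ℝ) + 1)) := by
            rw [← mul_assoc, inv_mul_cancel₀ (hσpos i).ne', one_mul]
    have hnorm0 : Tendsto (fun i => ‖(σ i)⁻¹ • (q i - x0) - p‖) atTop (𝓝 0) := by
      refine squeeze_zero (fun i => norm_nonneg _) hbound ?_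
      have := tendsto_one_div_add_atTop_nhds_zero_nat.const_mul (2 * κ + 1)
      simpa using this
    exact tendsto_iff_norm_sub_tendsto_zero.mpr hnorm0
  · intro i
    rw [smul_smul, mul_inv_cancel₀ (hσpos i).ne', one_smul]
    simpa using hqΩ i


/-- robustness of the subnormal cone to a set subamenable at `xb`
(with subamenability data `Y, f, Θ, κ, U`) in a reflexive Banach space. -/
theorem subnormal_robust_of_subamenable
    {X Y : Type*} [NormedAddCommGroup X] [NormedSpace ℝ X] [CompleteSpace X]
    [NormedAddCommGroup Y] [NormedSpace ℝ Y]
    (hrefl : Function.Surjective ⇑(NormedSpace.inclusionInDoubleDual ℝ X))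
    (Ω : Set X) (xb : X) (hxb : xb ∈ Ω) (hΩcl : IsClosed Ω)
    (f : X → Y) (Θ : Set Y) (κ : ℝ) (U : Set X)
    (hU : U ∈ 𝓝 xb) (hf : ContDiffAt ℝ 1 f xb)
    (hΘcl : IsClosed Θ) (hΘconv : Convex ℝ Θ) (hfxb : f xb ∈ Θ) (hκ : 0 < κ)
    (hrep : Ω ∩ U = {x ∈ U | f x ∈ Θ})
    (hsub : ∀ x ∈ U, infDist x Ω ≤ κ * infDist (f x) Θ) :
    subNormal Ω xb =
      {v : X →L[ℝ] ℝ | ∃ x : ℕ → X, ∃ vs : ℕ → (X →L[ℝ] ℝ),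
        (∀ k, x k ∈ Ω) ∧ Tendsto x atTop (𝓝 xb) ∧
        (∀ k, vs k ∈ subNormal Ω (x k)) ∧
        ∀ z : X, Tendsto (fun k => vs k z) atTop (𝓝 (v z))} := by
  apply Subset.antisymm
  · intro v hv
    exact ⟨fun _ => xb, fun _ => v, fun _ => hxb, tendsto_const_nhds, fun _ => hv,
      fun z => tendsto_const_nhds⟩
  rintro v ⟨x, vs, hxΩ, hxlim, hvs, hvlim⟩
  rintro u ⟨t, uu, htpos, htlim, huulim, htmem⟩
  -- uniform bound on the norms of `vs k`
  obtain ⟨M0, hM0⟩ : ∃ M0, ∀ k, ‖vs k‖ ≤ M0 := by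
    apply banach_steinhaus
    intro z
    obtain ⟨C, hC⟩ := (hvlim z).norm.bddAbove_range
    exact ⟨C, fun k => hC ⟨k, rfl⟩⟩
  set M := max M0 0 with hMdef
  have hM : ∀ k, ‖vs k‖ ≤ M := fun k => (hM0 k).trans (le_max_left _ _)
  have hMnn : 0 ≤ M := le_max_right _ _
  clear_value M
  -- a good open neighborhood of `xb`
  obtain ⟨V0, hV0n, hV0⟩ := hf.contDiffOn le_rfl (by simp)
  set V : Set X := interior V0 ∩ interior U with hVdef
  have hVopen : IsOpen V := isOpen_interior.inter isOpen_interior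
  have hxbV : xb ∈ V := ⟨mem_interior_iff_mem_nhds.mpr hV0n, mem_interior_iff_mem_nhds.mpr hU⟩
  have hVU : V ⊆ U := fun y hy => interior_subset hy.2
  have hVdiff : ∀ y ∈ V, DifferentiableAt ℝ f y := by
    intro y hy
    exact ((hV0.mono interior_subset).differentiableOn one_ne_zero).differentiableAt
      (isOpen_interior.mem_nhds hy.1)
  have hfdc : ContinuousOn (fderiv ℝ f) (interior V0) :=
    (hV0.mono interior_subset).continuousOn_fderiv_of_isOpen isOpen_interior le_rfl
  set A := fderiv ℝ f xb with hAdef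
  have hdxb : HasFDerivAt f A xb := (hVdiff xb hxbV).hasFDerivAt
  obtain ⟨ρ, hρpos, hρ⟩ : ∃ ρ > 0, closedBall xb ρ ⊆ V :=
    Metric.nhds_basis_closedBall.mem_iff.mp (hVopen.mem_nhds hxbV)
  have hΘmem : ∀ y, y ∈ Ω → y ∈ U → f y ∈ Θ := by
    intro y h1 h2
    have hy : y ∈ Ω ∩ U := ⟨h1, h2⟩
    rw [hrep] at hy
    exact hy.2
  have main : ∀ ε : ℝ, 0 < ε → v u ≤ ε := by
    intro ε hε
    set ε' := ε / (3 * (M + 1) * κ + 1) with hε'def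
    have hε'pos : 0 < ε' := by
      rw [hε'def]; positivity
    clear_value ε'
    -- Step 1 : choose a good index j
    have htv : Tendsto (fun j => t j • uu j) atTop (𝓝 (0:X)) := by
      have h1 := htlim.smul huulim
      rwa [zero_smul] at h1
    have hxtv : Tendsto (fun j => xb + t j • uu j) atTop (𝓝 xb) := by
      have h1 := (tendsto_const_nhds : Tendsto (fun _ : ℕ => xb) atTop (𝓝 xb)).add htv
      rwa [add_zero] at h1
    have hjV : ∀ᶠ j in atTop, xb + t j • uu j ∈ V :=
      hxtv.eventually_mem (hVopen.mem_nhds hxbV)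
    have hlo := hasFDerivAt_iff_isLittleO_nhds_zero.mp hdxb
    have hjlo : ∀ᶠ j in atTop, ‖f (xb + t j • uu j) - f xb - A (t j • uu j)‖
        ≤ ε' / (2 * (‖u‖ + 2)) * ‖t j • uu j‖ := htv.eventually (hlo.def (by positivity))
    have hjuu : ∀ᶠ j in atTop, ‖uu j‖ ≤ ‖u‖ + 1 :=
      huulim.norm.eventually_le_const (by linarith)
    have hjA : ∀ᶠ j in atTop, ‖A (uu j) - A u‖ ≤ ε' / 2 := by
      have h2 : Tendsto (fun j => A (uu j)) atTop (𝓝 (A u)) :=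
        (A.continuous.tendsto u).comp huulim
      have h1 : Tendsto (fun j => ‖A (uu j) - A u‖) atTop (𝓝 0) := by
        simpa using (h2.sub_const (A u)).norm
      exact h1.eventually_le_const (by positivity)
    obtain ⟨j, hjV', hjlo', hjuu', hjA'⟩ := (hjV.and (hjlo.and (hjuu.and hjA))).exists
    set zj := f (xb + t j • uu j) with hzjdef
    have hzjΘ : zj ∈ Θ := hΘmem _ (htmem j) (hVU hjV')
    have hδj : ‖A u - (t j)⁻¹ • (zj - f xb)‖ ≤ ε' := by
      have htj := htpos j
      have hidj : A u - (t j)⁻¹ • (zj - f xb)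
          = (A u - A (uu j)) - (t j)⁻¹ • (zj - f xb - A (t j • uu j)) := by
        have e1 : A (t j • uu j) = t j • A (uu j) := map_smul A (t j) (uu j)
        rw [hzjdef, e1]
        match_scalars <;> field_simp <;> ring
      rw [hidj]
      have h2 : ‖(t j)⁻¹ • (zj - f xb - A (t j • uu j))‖ ≤ ε' / 2 := by
        rw [norm_smul, Real.norm_eq_abs, abs_of_pos (inv_pos.mpr htj)]
        have h3 : ‖t j • uu j‖ ≤ t j * (‖u‖ + 1) := by
          rw [norm_smul, Real.norm_eq_abs, abs_of_pos htj]
          exact mul_le_mul_of_nonneg_left hjuu' htj.le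
        calc (t j)⁻¹ * ‖zj - f xb - A (t j • uu j)‖
            ≤ (t j)⁻¹ * (ε' / (2 * (‖u‖ + 2)) * (t j * (‖u‖ + 1))) := by
              refine mul_le_mul_of_nonneg_left ?_ (inv_pos.mpr htj).le
              exact hjlo'.trans (mul_le_mul_of_nonneg_left h3 (by positivity))
          _ = ε' / (2 * (‖u‖ + 2)) * (‖u‖ + 1) := by
              field_simp
          _ ≤ ε' / 2 := by
              rw [div_mul_eq_mul_div, div_le_div_iff₀ (by positivity) (by positivity)]
              nlinarith [norm_nonneg u, hε'pos.le]
      calc ‖(A u - A (uu j)) - (t j)⁻¹ • (zj - f xb - A (t j • uu j))‖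
          ≤ ‖A u - A (uu j)‖ + ‖(t j)⁻¹ • (zj - f xb - A (t j • uu j))‖ := norm_sub_le _ _
        _ ≤ ε' / 2 + ε' / 2 := by
            refine add_le_add ?_ h2
            rwa [norm_sub_rev] at hjA'
        _ = ε' := by ring
    -- Step 2 : eventual conditions on k
    have hkV : ∀ᶠ k in atTop, x k ∈ closedBall xb (ρ/2) :=
      hxlim.eventually_mem (closedBall_mem_nhds xb (by positivity))
    have hkA : ∀ᶠ k in atTop, ‖fderiv ℝ f (x k) u - A u‖ ≤ ε' := by
      have h1 : Tendsto (fun k => fderiv ℝ f (x k)) atTop (𝓝 A) := by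
        have hcA : ContinuousAt (fderiv ℝ f) xb :=
          hfdc.continuousAt (isOpen_interior.mem_nhds hxbV.1)
        exact hcA.tendsto.comp hxlim
      have h3 : Tendsto (fun k => fderiv ℝ f (x k) u) atTop (𝓝 (A u)) :=
        ((ContinuousLinearMap.apply ℝ Y u).continuous.tendsto A).comp h1
      have h2 : Tendsto (fun k => ‖fderiv ℝ f (x k) u - A u‖) atTop (𝓝 0) := by
        simpa using (h3.sub_const (A u)).norm
      exact h2.eventually_le_const (by positivity)
    have hkf : ∀ᶠ k in atTop, ‖f (x k) - f xb‖ ≤ ε' * t j := by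
      have h1 : Tendsto (fun k => f (x k)) atTop (𝓝 (f xb)) :=
        ((hVdiff xb hxbV).continuousAt.tendsto).comp hxlim
      have h2 : Tendsto (fun k => ‖f (x k) - f xb‖) atTop (𝓝 0) := by
        simpa using (h1.sub_const (f xb)).norm
      exact h2.eventually_le_const (mul_pos hε'pos (htpos j))
    -- Step 3 : the per-k bound
    have hkey : ∀ᶠ k in atTop, vs k u ≤ M * (κ * (3 * ε')) := by
      filter_upwards [hkV, hkA, hkf] with k hk1 hk2 hk3
      set Ak := fderiv ℝ f (x k) with hAkdef
      have hxkV : x k ∈ V := hρ (closedBall_subset_closedBall (by linarith) hk1)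
      have hdk : HasFDerivAt f Ak (x k) := (hVdiff _ hxkV).hasFDerivAt
      have hxkU : x k ∈ U := hVU hxkV
      have hfxkΘ : f (x k) ∈ Θ := hΘmem _ (hxΩ k) hxkU
      set β := ‖Ak u - (t j)⁻¹ • (zj - f (x k))‖ with hβdef
      have hβnn : 0 ≤ β := norm_nonneg _
      have hβ : β ≤ 3 * ε' := by
        have hidβ : Ak u - (t j)⁻¹ • (zj - f (x k))
            = (Ak u - A u) + (A u - (t j)⁻¹ • (zj - f xb)) + (t j)⁻¹ • (f (x k) - f xb) := by
          rw [smul_sub, smul_sub, smul_sub]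
          abel
        rw [hβdef, hidβ]
        have h3 : ‖(t j)⁻¹ • (f (x k) - f xb)‖ ≤ ε' := by
          rw [norm_smul, Real.norm_eq_abs, abs_of_pos (inv_pos.mpr (htpos j))]
          calc (t j)⁻¹ * ‖f (x k) - f xb‖ ≤ (t j)⁻¹ * (ε' * t j) :=
                mul_le_mul_of_nonneg_left hk3 (inv_pos.mpr (htpos j)).le
            _ = ε' := by
                rw [mul_comm ε' (t j), ← mul_assoc, inv_mul_cancel₀ (htpos j).ne', one_mul]
        calc ‖(Ak u - A u) + (A u - (t j)⁻¹ • (zj - f xb)) + (t j)⁻¹ • (f (x k) - f xb)‖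
            ≤ ‖Ak u - A u‖ + ‖A u - (t j)⁻¹ • (zj - f xb)‖ + ‖(t j)⁻¹ • (f (x k) - f xb)‖ :=
              norm_add₃_le
          _ ≤ ε' + ε' + ε' := add_le_add (add_le_add hk2 hδj) h3
          _ = 3 * ε' := by ring
      set K := ‖u‖ + κ * β + (κ + 1) with hKdef
      have hKpos : 0 < K := by
        have := norm_nonneg u
        have := mul_nonneg hκ.le hβnn
        rw [hKdef]; linarith
      clear_value K
      set Cxk := {y : Y | ∃ l : ℝ, 0 ≤ l ∧ ∃ z ∈ Θ, y = l • (z - f (x k))} with hCxkdef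
      -- the approximate tangent directions
      have key : ∀ n : ℕ, ∃ w : X,
          ‖w - u‖ ≤ κ * β + (κ + 1) * (1/((n:ℝ)+1)) ∧ ‖w‖ ≤ K ∧
          ∃ c ∈ Cxk, ‖Ak w - c‖ ≤ 1/((n:ℝ)+1) := by
        intro n
        set εn := (1:ℝ)/((n:ℝ)+1) with hεndef
        have hεnpos : 0 < εn := by positivity
        have hεn1 : εn ≤ 1 := by
          rw [hεndef, div_le_one (by positivity)]
          have hn0 : (0:ℝ) ≤ (n:ℝ) := Nat.cast_nonneg n
          linarith
        clear_value εn
        have hlo2 := hasFDerivAt_iff_isLittleO_nhds_zero.mp hdk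
        obtain ⟨δ2, hδ2pos, hδ2⟩ :=
          Metric.eventually_nhds_iff.mp (hlo2.def (c := εn/(K+1)) (by positivity))
        have htsu : Tendsto (fun s : ℝ => s • u) (𝓝[>] 0) (𝓝 (0:X)) := by
          have h1 : Tendsto (fun s : ℝ => s • u) (𝓝 0) (𝓝 ((0:ℝ) • u)) :=
            tendsto_id.smul_const u
          rw [zero_smul] at h1
          exact h1.mono_left nhdsWithin_le_nhds
        have hev1 : ∀ᶠ s in 𝓝[>] (0:ℝ),
            ‖f (x k + s • u) - f (x k) - Ak (s • u)‖ ≤ εn/(‖u‖+1) * ‖s • u‖ :=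
          htsu.eventually (hlo2.def (by positivity))
        have hev2 := small_s_event (t j) (htpos j)
        have hev3 := small_s_event (ρ/4 / (‖u‖+1)) (by positivity)
        have hev4 := small_s_event (ρ/4 / K) (by positivity)
        have hev5 := small_s_event (δ2/2 / K) (by positivity)
        have hev6 : ∀ᶠ s in 𝓝[>] (0:ℝ), 0 < s := self_mem_nhdsWithin
        obtain ⟨s, h1s, h2s, h3s, h4s, h5s, h6s⟩ :=
          (hev1.and (hev2.and (hev3.and (hev4.and (hev5.and hev6))))).exists
        have hsu : s * ‖u‖ ≤ ρ/4 := by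
          have := mul_le_mul_of_nonneg_right h3s (norm_nonneg u)
          have h7 : ρ/4 / (‖u‖+1) * ‖u‖ ≤ ρ/4 := by
            rw [div_mul_eq_mul_div, div_le_iff₀ (by positivity)]
            nlinarith [norm_nonneg u, hρpos]
          linarith
        have hsK1 : s * K ≤ ρ/4 := by
          have := mul_le_mul_of_nonneg_right h4s hKpos.le
          rwa [div_mul_cancel₀ _ hKpos.ne'] at this
        have hsK2 : s * K ≤ δ2/2 := by
          have := mul_le_mul_of_nonneg_right h5s hKpos.le
          rwa [div_mul_cancel₀ _ hKpos.ne'] at this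
        set y := x k + s • u with hydef
        have hdyx : dist y (x k) ≤ ρ/4 := by
          rw [hydef, dist_eq_norm, add_sub_cancel_left, norm_smul, Real.norm_eq_abs,
            abs_of_pos h6s]
          exact hsu
        have hyV : y ∈ V := by
          apply hρ
          rw [mem_closedBall]
          calc dist y xb ≤ dist y (x k) + dist (x k) xb := dist_triangle _ _ _
            _ ≤ ρ/4 + ρ/2 := add_le_add hdyx hk1
            _ ≤ ρ := by linarith
        have hyU : y ∈ U := hVU hyV
        have hθn : f (x k) + (s * (t j)⁻¹) • (zj - f (x k)) ∈ Θ := by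
          have hstj : 0 ≤ s * (t j)⁻¹ := (mul_pos h6s (inv_pos.mpr (htpos j))).le
          have hstj1 : s * (t j)⁻¹ ≤ 1 := by
            rw [← le_div_iff₀ (inv_pos.mpr (htpos j))]
            simpa using h2s
          have hmem := hΘconv hfxkΘ hzjΘ (a := 1 - s * (t j)⁻¹) (b := s * (t j)⁻¹)
            (by linarith) hstj (by ring)
          have hrw : (1 - s * (t j)⁻¹) • f (x k) + (s * (t j)⁻¹) • zj
              = f (x k) + (s * (t j)⁻¹) • (zj - f (x k)) := by module
          rwa [hrw] at hmem
        have hfy : infDist (f y) Θ ≤ s * εn + s * β := by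
          have hle := infDist_le_dist_of_mem (x := f y) hθn
          have hid1 : f y - (f (x k) + (s * (t j)⁻¹) • (zj - f (x k)))
              = (f y - f (x k) - Ak (s • u))
                + s • (Ak u - (t j)⁻¹ • (zj - f (x k))) := by
            rw [map_smul]
            match_scalars <;> ring
          have htri : dist (f y) (f (x k) + (s * (t j)⁻¹) • (zj - f (x k)))
              ≤ ‖f y - f (x k) - Ak (s • u)‖ + ‖s • (Ak u - (t j)⁻¹ • (zj - f (x k)))‖ := by
            rw [dist_eq_norm, hid1]
            exact norm_add_le _ _
          have hb1 : ‖f y - f (x k) - Ak (s • u)‖ ≤ s * εn := by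
            refine h1s.trans ?_
            rw [norm_smul, Real.norm_eq_abs, abs_of_pos h6s]
            rw [div_mul_eq_mul_div, div_le_iff₀ (by positivity)]
            nlinarith [norm_nonneg u, hεnpos.le, h6s.le, mul_pos h6s hεnpos]
          have hb2 : ‖s • (Ak u - (t j)⁻¹ • (zj - f (x k)))‖ = s * β := by
            rw [norm_smul, Real.norm_eq_abs, abs_of_pos h6s, hβdef]
          linarith [hle, htri, hb1, hb2.le, hb2.ge]
        have hinf : infDist y Ω < s * (κ * β + (κ+1) * εn) := by
          have h8 := (hsub y hyU).trans (mul_le_mul_of_nonneg_left hfy hκ.le)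
          nlinarith [hεnpos, h6s]
        obtain ⟨q, hqΩ, hqdist⟩ := (infDist_lt_iff ⟨xb, hxb⟩).mp hinf
        have hqy : ‖q - y‖ ≤ s * (κ * β + (κ+1) * εn) := by
          rw [← dist_eq_norm, dist_comm]
          exact hqdist.le
        have hqxk : ‖q - x k‖ ≤ s * K := by
          have h9 : ‖q - x k‖ ≤ ‖q - y‖ + ‖y - x k‖ := by
            have : q - x k = (q - y) + (y - x k) := by abel
            rw [this]; exact norm_add_le _ _
          have h10 : ‖y - x k‖ = s * ‖u‖ := by
            rw [hydef, add_sub_cancel_left, norm_smul, Real.norm_eq_abs, abs_of_pos h6s]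
          have h11 : (κ+1) * εn ≤ (κ+1) := by nlinarith [hεn1, hεnpos.le, hκ.le]
          rw [hKdef]
          nlinarith [h6s.le, hqy, norm_nonneg u]
        have hqU : q ∈ U := by
          apply hVU; apply hρ
          rw [mem_closedBall]
          calc dist q xb ≤ dist q (x k) + dist (x k) xb := dist_triangle _ _ _
            _ ≤ s * K + ρ/2 := by
                refine add_le_add ?_ hk1
                rw [dist_eq_norm]; exact hqxk
            _ ≤ ρ := by linarith
        have hfqΘ : f q ∈ Θ := hΘmem q hqΩ hqU
        refine ⟨s⁻¹ • (q - x k), ?_, ?_, s⁻¹ • (f q - f (x k)),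
          ⟨s⁻¹, (inv_pos.mpr h6s).le, f q, hfqΘ, rfl⟩, ?_⟩
        · have hidw : s⁻¹ • (q - x k) - u = s⁻¹ • (q - y) := by
            rw [hydef, smul_sub, smul_sub, smul_add, smul_smul,
              inv_mul_cancel₀ h6s.ne', one_smul]
            abel
          rw [hidw, norm_smul, Real.norm_eq_abs, abs_of_pos (inv_pos.mpr h6s)]
          calc s⁻¹ * ‖q - y‖ ≤ s⁻¹ * (s * (κ * β + (κ+1) * εn)) :=
                mul_le_mul_of_nonneg_left hqy (inv_pos.mpr h6s).le
            _ = κ * β + (κ+1) * εn := by field_simp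
        · have h12 : ‖s⁻¹ • (q - x k)‖ ≤ s⁻¹ * (s * K) := by
            rw [norm_smul, Real.norm_eq_abs, abs_of_pos (inv_pos.mpr h6s)]
            exact mul_le_mul_of_nonneg_left hqxk (inv_pos.mpr h6s).le
          calc ‖s⁻¹ • (q - x k)‖ ≤ s⁻¹ * (s * K) := h12
            _ = K := by field_simp
        · have hidc : Ak (s⁻¹ • (q - x k)) - s⁻¹ • (f q - f (x k))
              = -(s⁻¹ • (f (x k + (q - x k)) - f (x k) - Ak (q - x k))) := by
            rw [map_smul, add_sub_cancel]
            match_scalars <;> ring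
          rw [hidc, norm_neg, norm_smul, Real.norm_eq_abs, abs_of_pos (inv_pos.mpr h6s)]
          have hδ2' : ‖f (x k + (q - x k)) - f (x k) - Ak (q - x k)‖ ≤ εn/(K+1) * ‖q - x k‖ := by
            apply hδ2
            rw [dist_zero_right]
            calc ‖q - x k‖ ≤ s * K := hqxk
              _ ≤ δ2/2 := hsK2
              _ < δ2 := by linarith
          calc s⁻¹ * ‖f (x k + (q - x k)) - f (x k) - Ak (q - x k)‖
              ≤ s⁻¹ * (εn/(K+1) * (s * K)) := by
                refine mul_le_mul_of_nonneg_left ?_ (inv_pos.mpr h6s).le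
                exact hδ2'.trans (mul_le_mul_of_nonneg_left hqxk (by positivity))
            _ = εn * (K / (K+1)) := by field_simp
            _ ≤ εn := by
                nlinarith [div_le_one_of_le₀ (by linarith : K ≤ K + 1) (by positivity : (0:ℝ) ≤ K + 1), hεnpos.le]
      -- extract the weak cluster point
      choose w hw1 hw2 c hcC hc using key
      obtain ⟨p, hp⟩ := exists_weak_cluster hrefl w K hw2
      have hgp : ∀ g : X →L[ℝ] ℝ, g (p - u) ≤ ‖g‖ * (κ * β) := by
        intro g
        have hstep : ∀ m : ℕ, g (p - u) ≤ ‖g‖ * (κ * β) + (‖g‖ * (κ+1)) / ((m:ℝ)+1) := by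
          intro m
          have hev : ∀ᶠ n in atTop,
              g (w n) ≤ g u + (‖g‖ * (κ * β) + (‖g‖ * (κ+1)) / ((m:ℝ)+1)) := by
            filter_upwards [eventually_ge_atTop m] with n hn
            have h1 : g (w n) - g u ≤ ‖g‖ * ‖w n - u‖ := by
              rw [← map_sub]
              exact (le_abs_self _).trans (g.le_opNorm _)
            have h2 := hw1 n
            have h3 : (1:ℝ)/((n:ℝ)+1) ≤ 1/((m:ℝ)+1) := by
              apply one_div_le_one_div_of_le (by positivity)
              have : (m:ℝ) ≤ (n:ℝ) := Nat.cast_le.mpr hn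
              linarith
            have h4 : ‖g‖ * ‖w n - u‖
                ≤ ‖g‖ * (κ * β) + ‖g‖ * (κ+1) * (1/((m:ℝ)+1)) := by
              have h5 : ‖w n - u‖ ≤ κ * β + (κ+1) * (1/((m:ℝ)+1)) := by
                refine h2.trans ?_
                have : (κ+1) * (1/((n:ℝ)+1)) ≤ (κ+1) * (1/((m:ℝ)+1)) :=
                  mul_le_mul_of_nonneg_left h3 (by linarith [hκ.le])
                linarith
              calc ‖g‖ * ‖w n - u‖ ≤ ‖g‖ * (κ * β + (κ+1) * (1/((m:ℝ)+1))) :=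
                    mul_le_mul_of_nonneg_left h5 (norm_nonneg g)
                _ = ‖g‖ * (κ * β) + ‖g‖ * (κ+1) * (1/((m:ℝ)+1)) := by ring
            have h6 : ‖g‖ * (κ+1) * (1/((m:ℝ)+1)) = (‖g‖ * (κ+1)) / ((m:ℝ)+1) := by
              ring
            linarith [h4, h6.le, h6.ge]
          have h7 := hp g _ hev
          rw [map_sub]
          linarith
        exact le_of_forall_nat_le (by positivity) hstep
      have hpu : ‖p - u‖ ≤ κ * β := by
        have hκβ : 0 ≤ κ * β := mul_nonneg hκ.le hβnn
        apply NormedSpace.norm_le_dual_bound ℝ (p - u) hκβ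
        intro g
        have h1 := hgp g
        have h2 := hgp (-g)
        rw [ContinuousLinearMap.neg_apply, norm_neg] at h2
        rw [Real.norm_eq_abs, mul_comm]
        exact abs_le.mpr ⟨by linarith, h1⟩
      have hAp : Ak p ∈ closure Cxk := by
        apply mem_closure_cone_of_forall_polar hΘconv hfxkΘ
        intro g hg
        have hstep : ∀ m : ℕ, g (Ak p) ≤ 0 + ‖g‖ / ((m:ℝ)+1) := by
          intro m
          have hev : ∀ᶠ n in atTop, (g.comp Ak) (w n) ≤ 0 + ‖g‖ / ((m:ℝ)+1) := by
            filter_upwards [eventually_ge_atTop m] with n hn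
            have h1 : g (Ak (w n)) = g (c n) + g (Ak (w n) - c n) := by
              rw [← map_add]
              congr 1
              abel
            have h2 : g (c n) ≤ 0 := hg _ (hcC n)
            have h3 : g (Ak (w n) - c n) ≤ ‖g‖ * (1/((n:ℝ)+1)) := by
              refine (le_abs_self _).trans ?_
              rw [← Real.norm_eq_abs]
              exact (g.le_opNorm _).trans (mul_le_mul_of_nonneg_left (hc n) (norm_nonneg g))
            have h4 : (1:ℝ)/((n:ℝ)+1) ≤ 1/((m:ℝ)+1) := by
              apply one_div_le_one_div_of_le (by positivity)
              have h5 : (m:ℝ) ≤ (n:ℝ) := Nat.cast_le.mpr hn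
              linarith
            have h6 : ‖g‖ * (1/((n:ℝ)+1)) ≤ ‖g‖ / ((m:ℝ)+1) := by
              rw [div_eq_mul_one_div ‖g‖ ((m:ℝ)+1)]
              exact mul_le_mul_of_nonneg_left h4 (norm_nonneg g)
            simp only [ContinuousLinearMap.comp_apply]
            linarith
          simpa using hp (g.comp Ak) _ hev
        have h6 := le_of_forall_nat_le (c := ‖g‖) (norm_nonneg g) hstep
        linarith
      have hU0k : ∀ᶠ h in 𝓝 (0:X), x k + h ∈ U := by
        rw [Metric.eventually_nhds_iff]
        refine ⟨ρ/4, by positivity, fun {h} hh => ?_⟩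
        apply hVU
        apply hρ
        rw [mem_closedBall]
        calc dist (x k + h) xb ≤ dist (x k + h) (x k) + dist (x k) xb := dist_triangle _ _ _
          _ ≤ ρ/4 + ρ/2 := by
              refine add_le_add ?_ hk1
              rw [dist_eq_norm, add_sub_cancel_left]
              rw [dist_zero_right] at hh
              exact hh.le
          _ ≤ ρ := by linarith
      have htanp : p ∈ contTangent Ω (x k) :=
        mem_contTangent_aux Ω ⟨xb, hxb⟩ f Θ κ hκ U hΘconv hsub (x k) (hxΩ k) hfxkΘ hU0k
          Ak hdk p hAp
      have hvsp : vs k p ≤ 0 := hvs k p htanp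
      have h7 : vs k u - vs k p ≤ M * (κ * β) := by
        rw [← map_sub]
        have h8 : vs k (u - p) ≤ ‖vs k‖ * ‖u - p‖ := by
          refine (le_abs_self _).trans ?_
          rw [← Real.norm_eq_abs]
          exact (vs k).le_opNorm _
        have h9 : ‖u - p‖ ≤ κ * β := by
          rw [norm_sub_rev]
          exact hpu
        calc vs k (u - p) ≤ ‖vs k‖ * ‖u - p‖ := h8
          _ ≤ M * (κ * β) := mul_le_mul (hM k) h9 (norm_nonneg _) hMnn
      have h10 : M * (κ * β) ≤ M * (κ * (3 * ε')) := by
        exact mul_le_mul_of_nonneg_left (mul_le_mul_of_nonneg_left hβ hκ.le) hMnn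
      linarith
    have hfin : v u ≤ M * (κ * (3 * ε')) := le_of_tendsto (hvlim u) hkey
    have hD : 0 < 3 * (M + 1) * κ + 1 := by nlinarith
    calc v u ≤ M * (κ * (3 * ε')) := hfin
      _ ≤ ε := by
          rw [hε'def]
          have hq : M * (κ * (3 * (ε / (3 * (M + 1) * κ + 1))))
              = 3 * M * κ * ε / (3 * (M + 1) * κ + 1) := by ring
          rw [hq, div_le_iff₀ hD]
          nlinarith [mul_pos hε hκ]
  refine _root_.le_of_forall_pos_le_add fun ε hε => ?_
  simpa using main ε hε
end
end

section
/- Let X be a reflexive Banach space and let Ω ⊂ X be strongly subamenable at x̄ ∈ Ω, i.e., Ω is closed and there exist a neighborhood U of x̄, a normed space Y, a mapping f : X → Y that is twice continuously differentiable around x̄, a closed convex set Θ ⊂ Y with f(x̄) ∈ Θ, and κ > 0 such that Ω ∩ U = {x ∈ U : f(x) ∈ Θ} and dist(x; Ω) ≤ κ·dist(f(x); Θ) for all x ∈ U. Then Ω is prox-regular at x̄ for every normal vector v̄ ∈ N⁻_Ω(x̄): there exist r > 0, a neighborhood U' of x̄, and a bounded neighborhood V of v̄ in the norm topology of X* such that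 ⟨v, u − x⟩ ≤ r‖u − x‖² whenever x, u ∈ Ω ∩ U' and v ∈ N⁻_Ω(x) ∩ V. -/
open scoped Classical
open Filter Topology Set Metric Pointwise

noncomputable section

variable {E : Type*} [NormedAddCommGroup E] [NormedSpace ℝ E]

private lemma exists_seq_rec {X : Type*} (P : ℕ → X → Prop) (R : ℕ → X → X → Prop)
    (z0 : X) (h0 : P 0 z0) (hstep : ∀ k z, P k z → ∃ z', P (k+1) z' ∧ R k z z') :
    ∃ w : ℕ → X, w 0 = z0 ∧ (∀ k, P k (w k)) ∧ ∀ k, R k (w k) (w (k+1)) := by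
  choose F hF1 hF2 using hstep
  set g : ℕ → X := fun k => Nat.rec z0 (fun k z => if h : P k z then F k z h else z0) k with hg
  have hgs : ∀ k, g (k+1) = if h : P k (g k) then F k (g k) h else z0 := fun k => rfl
  have hP : ∀ k, P k (g k) := by
    intro k
    induction k with
    | zero => exact h0
    | succ k ih => rw [hgs, dif_pos ih]; exact hF1 k (g k) ih
  refine ⟨g, rfl, hP, fun k => ?_⟩
  have := hgs k
  rw [dif_pos (hP k)] at this
  rw [this]
  exact hF2 k (g k) (hP k)

set_option maxHeartbeats 1000000 in
private lemma key_estimate {X : Type*} [NormedAddCommGroup X] [NormedSpace ℝ X] [CompleteSpace X]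
    (Ω : Set X) (x : X) (hx : x ∈ Ω) (c R : ℝ) (hc : 0 ≤ c)
    (H : ∀ z ∈ Ω, ‖z - x‖ ≤ R → infDist (x + (2⁻¹:ℝ) • (z - x)) Ω ≤ c/2 * ‖z - x‖^2)
    (ω : X) (hω : ω ∈ Ω) (hωR : ‖ω - x‖ ≤ R/2)
    (hsm1 : c * ‖ω - x‖ ≤ 1/16) (hsm2 : ‖ω - x‖ ≤ 1/16) :
    ∀ v ∈ subNormal Ω x, v (ω - x) ≤ 4*(2*c+1)*‖v‖*‖ω - x‖^2 := by
  intro v hv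
  set d : ℝ := ‖ω - x‖ with hd
  rcases eq_or_lt_of_le (norm_nonneg (ω - x)) with h0 | hdpos
  · have hz : ω - x = 0 := by rwa [eq_comm, norm_eq_zero] at h0
    rw [hz, map_zero]
    have h1 : (0:ℝ) ≤ 4*(2*c+1) := by linarith
    have := mul_nonneg (mul_nonneg h1 (norm_nonneg v)) (sq_nonneg d)
    linarith
  rw [← hd] at hdpos
  -- step property
  set P : ℕ → X → Prop := fun k z => z ∈ Ω ∧ ‖z - x‖ ≤ d * (2 - (1/2:ℝ)^k) * (1/2:ℝ)^k with hP
  set Rel : ℕ → X → X → Prop := fun k z z' =>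
    ‖z' - (x + (2⁻¹:ℝ) • (z - x))‖ ≤ c/2 * ‖z - x‖^2 + d^2 * (1/4:ℝ)^k with hRel
  have hstep : ∀ k z, P k z → ∃ z', P (k+1) z' ∧ Rel k z z' := by
    intro k z ⟨hzΩ, hzb⟩
    set s : ℝ := (1/2:ℝ)^k with hs
    have hs0 : 0 < s := by positivity
    have hs1 : s ≤ 1 := pow_le_one₀ (by norm_num) (by norm_num)
    have h4 : ((1/4:ℝ))^k = s^2 := by
      rw [hs, show (1/4:ℝ) = (1/2)*(1/2) by norm_num, mul_pow]; ring
    have hDnn : (0:ℝ) ≤ ‖z - x‖ := norm_nonneg _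
    have hD2 : ‖z - x‖ ≤ 2 * d * s := by nlinarith [hzb]
    have hzR : ‖z - x‖ ≤ R := by nlinarith
    have hinf := H z hzΩ hzR
    have hlt : infDist (x + (2⁻¹:ℝ) • (z - x)) Ω < c/2 * ‖z - x‖^2 + d^2 * (1/4:ℝ)^k := by
      have : (0:ℝ) < d^2 * (1/4:ℝ)^k := by positivity
      linarith
    obtain ⟨z', hz'Ω, hz'd⟩ := (infDist_lt_iff ⟨x, hx⟩).1 hlt
    rw [dist_comm, dist_eq_norm] at hz'd
    refine ⟨z', ⟨hz'Ω, ?_⟩, le_of_lt hz'd⟩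
    have hmx : ‖x + (2⁻¹:ℝ) • (z - x) - x‖ = ‖z - x‖ / 2 := by
      rw [add_sub_cancel_left, norm_smul, Real.norm_eq_abs,
        abs_of_nonneg (by norm_num : (0:ℝ) ≤ 2⁻¹)]
      ring
    have htri : ‖z' - x‖ ≤ ‖z - x‖/2 + (c/2 * ‖z - x‖^2 + d^2 * (1/4:ℝ)^k) := by
      have := norm_add_le (z' - (x + (2⁻¹:ℝ) • (z - x))) (x + (2⁻¹:ℝ) • (z - x) - x)
      rw [sub_add_sub_cancel] at this
      rw [hmx] at this
      linarith
    have hpow : (1/2:ℝ)^(k+1) = s * (1/2) := by rw [hs, pow_succ]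
    rw [hpow, h4] at *
    -- goal : ‖z' - x‖ ≤ d * (2 - s * (1/2)) * (s * (1/2))
    have hcd : c * d ≤ 1/16 := hsm1
    have hd16 : d ≤ 1/16 := hsm2
    nlinarith [hzb, sq_nonneg (‖z - x‖), sq_nonneg s, sq_nonneg (s*d),
      mul_le_mul_of_nonneg_right hD2 hDnn, sq_nonneg (2*d*s - ‖z - x‖)]
  have h0 : P 0 ω := ⟨hω, by
    norm_num
    exact hd.ge⟩
  obtain ⟨w, hw0, hwP, hwR⟩ := exists_seq_rec P Rel ω h0 hstep
  -- the rescaled sequence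
  set u : ℕ → X := fun k => (2:ℝ)^k • (w k - x) with hu
  have hC : ∀ k, dist (u k) (u (k+1)) ≤ (2*(2*c+1)*d^2) * (1/2:ℝ)^k := by
    intro k
    have hrel := hwR k
    have hDk : ‖w k - x‖ ≤ 2 * d * (1/2:ℝ)^k := by
      have := (hwP k).2
      have hs0 : (0:ℝ) < (1/2:ℝ)^k := by positivity
      nlinarith [this, hs0.le, hdpos.le, mul_nonneg (mul_nonneg hdpos.le hs0.le) hs0.le]
    have hids : u (k+1) - u k = ((2:ℝ)^(k+1)) • (w (k+1) - (x + (2⁻¹:ℝ) • (w k - x))) := by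
      rw [hu]
      simp only [pow_succ]
      rw [smul_sub, smul_sub, smul_sub]
      rw [smul_add]
      rw [smul_smul]
      have : (2:ℝ)^k * 2 * 2⁻¹ = (2:ℝ)^k := by ring
      rw [this]
      module
    rw [dist_comm, dist_eq_norm, hids, norm_smul]
    have h2p : ‖(2:ℝ)^(k+1)‖ = (2:ℝ)^(k+1) := by
      rw [Real.norm_eq_abs, abs_of_pos]; positivity
    rw [h2p]
    have hb : ‖w (k+1) - (x + (2⁻¹:ℝ) • (w k - x))‖ ≤ (2*c+1) * d^2 * (1/4:ℝ)^k := by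
      refine le_trans hrel ?_
      have hsq : ‖w k - x‖ * ‖w k - x‖ ≤ (2*d*(1/2:ℝ)^k) * (2*d*(1/2:ℝ)^k) :=
        mul_self_le_mul_self (norm_nonneg _) hDk
      have h4 : ((1/4:ℝ))^k = (1/2:ℝ)^k * (1/2:ℝ)^k := by
        rw [show (1/4:ℝ) = (1/2)*(1/2) by norm_num, mul_pow]
      have h1 : c/2 * ‖w k - x‖^2 ≤ 2*c*d^2*(1/4:ℝ)^k := by
        rw [h4]
        nlinarith [mul_le_mul_of_nonneg_left hsq (by linarith : (0:ℝ) ≤ c/2)]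
      linarith
    calc (2:ℝ)^(k+1) * ‖w (k+1) - (x + (2⁻¹:ℝ) • (w k - x))‖
        ≤ (2:ℝ)^(k+1) * ((2*c+1) * d^2 * (1/4:ℝ)^k) := by
          exact mul_le_mul_of_nonneg_left hb (by positivity)
      _ = (2*(2*c+1)*d^2) * (1/2:ℝ)^k := by
          have hone : (2:ℝ)^k * (1/2:ℝ)^k = 1 := by
            rw [← mul_pow]; norm_num
          have he : (2:ℝ)^(k+1) * (1/4:ℝ)^k = 2 * (1/2:ℝ)^k := by
            rw [pow_succ, show (1/4:ℝ) = (1/2)*(1/2) by norm_num, mul_pow]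
            linear_combination (2 * (1/2:ℝ)^k) * hone
          linear_combination ((2*c+1)*d^2) * he
  have hcauchy : CauchySeq u := cauchySeq_of_le_geometric (1/2) (2*(2*c+1)*d^2) (by norm_num) hC
  obtain ⟨L, hL⟩ := cauchySeq_tendsto_of_complete hcauchy
  have hdist : dist (u 0) L ≤ (2*(2*c+1)*d^2) / (1 - 1/2) :=
    dist_le_of_le_geometric_of_tendsto₀ _ _ (by norm_num) hC hL
  have hLmem : L ∈ contTangent Ω x := by
    refine ⟨fun k => (1/2:ℝ)^k, u, fun k => by positivity, ?_, hL, fun k => ?_⟩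
    · exact tendsto_pow_atTop_nhds_zero_of_lt_one (by norm_num) (by norm_num)
    · have : (1/2:ℝ)^k • u k = w k - x := by
        rw [hu, smul_smul, ← mul_pow]
        norm_num
      rw [this, add_sub_cancel]
      exact (hwP k).1
  have hvL : v L ≤ 0 := hv L hLmem
  have hu0 : u 0 = ω - x := by rw [hu]; simp [hw0]
  have hsplit : v (ω - x) = v L + v (u 0 - L) := by
    rw [hu0, ← map_add]
    congr 1
    abel
  have hbd : v (u 0 - L) ≤ ‖v‖ * ‖u 0 - L‖ :=
    le_trans (le_abs_self _) (v.le_opNorm _)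
  have hnorm : ‖u 0 - L‖ ≤ 4*(2*c+1)*d^2 := by
    rw [← dist_eq_norm]
    calc dist (u 0) L ≤ (2*(2*c+1)*d^2) / (1 - 1/2) := hdist
      _ = 4*(2*c+1)*d^2 := by ring
  calc v (ω - x) = v L + v (u 0 - L) := hsplit
    _ ≤ 0 + ‖v‖ * ‖u 0 - L‖ := add_le_add hvL hbd
    _ ≤ ‖v‖ * (4*(2*c+1)*d^2) := by
        rw [zero_add]
        exact mul_le_mul_of_nonneg_left hnorm (norm_nonneg v)
    _ = 4*(2*c+1)*‖v‖*d^2 := by ring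

private lemma taylor_quad {X Y : Type*} [NormedAddCommGroup X] [NormedSpace ℝ X]
    [NormedAddCommGroup Y] [NormedSpace ℝ Y] {f : X → Y} {xb : X}
    (hf : ContDiffAt ℝ 2 f xb) (U : Set X) (hU : U ∈ 𝓝 xb) :
    ∃ ρ : ℝ, 0 < ρ ∧ ∃ K : ℝ, 0 ≤ K ∧ closedBall xb ρ ⊆ U ∧
      ∀ a ∈ closedBall xb ρ, ∀ b ∈ closedBall xb ρ,
        ‖f b - f a - fderiv ℝ f a (b - a)‖ ≤ K * ‖b - a‖ ^ 2 := by
  have h1 : ContDiffAt ℝ 1 (fderiv ℝ f) xb := hf.fderiv_right (by norm_num)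
  obtain ⟨K, t, ht, hlip⟩ := h1.exists_lipschitzOnWith
  have hev : ∀ᶠ y in 𝓝 xb, DifferentiableAt ℝ f y :=
    (hf.eventually (by simp)).mono fun y hy => hy.differentiableAt (by norm_num)
  have hnhds : U ∩ t ∩ {y | DifferentiableAt ℝ f y} ∈ 𝓝 xb :=
    inter_mem (inter_mem hU ht) hev
  obtain ⟨ρ, hρ, hball⟩ := Metric.nhds_basis_closedBall.mem_iff.1 hnhds
  refine ⟨ρ, hρ, K, K.coe_nonneg, fun y hy => (hball hy).1.1, fun a ha b hb => ?_⟩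
  have hseg : segment ℝ a b ⊆ closedBall xb ρ :=
    (convex_closedBall xb ρ).segment_subset ha hb
  have hsegdist : ∀ w ∈ segment ℝ a b, ‖w - a‖ ≤ ‖b - a‖ := by
    intro w hw
    rw [segment_eq_image'] at hw
    obtain ⟨θ, hθ, rfl⟩ := hw
    simp only [add_sub_cancel_left, norm_smul, Real.norm_eq_abs,
      abs_of_nonneg hθ.1]
    nlinarith [norm_nonneg (b - a), hθ.1, hθ.2]
  have key := (convex_segment a b).norm_image_sub_le_of_norm_fderiv_le'
    (f := f) (φ := fderiv ℝ f a) (C := K * ‖b - a‖)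
    (fun w hw => (hball (hseg hw)).2)
    (fun w hw => by
      have h1 : a ∈ t := (hball (hseg (left_mem_segment ℝ a b))).1.2
      have h2 : w ∈ t := (hball (hseg hw)).1.2
      have := hlip.dist_le_mul w h2 a h1
      rw [dist_eq_norm, dist_eq_norm] at this
      calc ‖fderiv ℝ f w - fderiv ℝ f a‖ ≤ K * ‖w - a‖ := this
        _ ≤ K * ‖b - a‖ := by
            exact mul_le_mul_of_nonneg_left (hsegdist w hw) K.coe_nonneg)
    (left_mem_segment ℝ a b) (right_mem_segment ℝ a b)
  calc ‖f b - f a - (fderiv ℝ f a) (b - a)‖ ≤ K * ‖b - a‖ * ‖b - a‖ := key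
    _ = K * ‖b - a‖ ^ 2 := by ring

/-- prox-regularity of strongly subamenable sets (subamenability data
`Y, f, Θ, κ, U` with `f` twice continuously differentiable around `xb`) in a
reflexive Banach space. -/
theorem proxregular_of_strongly_subamenable
    {X Y : Type*} [NormedAddCommGroup X] [NormedSpace ℝ X] [CompleteSpace X]
    [NormedAddCommGroup Y] [NormedSpace ℝ Y]
    (hrefl : Function.Surjective ⇑(NormedSpace.inclusionInDoubleDual ℝ X))
    (Ω : Set X) (xb : X) (hxb : xb ∈ Ω) (hΩcl : IsClosed Ω)
    (f : X → Y) (Θ : Set Y) (κ : ℝ) (U : Set X)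
    (hU : U ∈ 𝓝 xb) (hf : ContDiffAt ℝ 2 f xb)
    (hΘcl : IsClosed Θ) (hΘconv : Convex ℝ Θ) (hfxb : f xb ∈ Θ) (hκ : 0 < κ)
    (hrep : Ω ∩ U = {x ∈ U | f x ∈ Θ})
    (hsub : ∀ x ∈ U, infDist x Ω ≤ κ * infDist (f x) Θ) :
    ∀ vb ∈ subNormal Ω xb,
      ∃ r : ℝ, 0 < r ∧ ∃ U' ∈ 𝓝 xb, ∃ V : Set (X →L[ℝ] ℝ),
        V ∈ 𝓝 vb ∧ Bornology.IsBounded V ∧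
        ∀ x ∈ Ω ∩ U', ∀ u ∈ Ω ∩ U', ∀ v ∈ subNormal Ω x ∩ V,
          v (u - x) ≤ r * ‖u - x‖ ^ 2 := by
  intro vb hvb
  obtain ⟨ρ, hρ, K, hK, hballU, htay⟩ := taylor_quad hf U hU
  set c : ℝ := 2 * κ * K with hc
  have hc0 : 0 ≤ c := by positivity
  -- paraconvexity: midpoints of points of Ω near xb are quadratically close to Ω
  have Hpara : ∀ y ∈ Ω ∩ closedBall xb ρ, ∀ z ∈ Ω ∩ closedBall xb ρ,
      infDist (y + (2⁻¹:ℝ) • (z - y)) Ω ≤ c/2 * ‖z - y‖^2 := by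
    rintro y ⟨hyΩ, hyB⟩ z ⟨hzΩ, hzB⟩
    set m := y + (2⁻¹:ℝ) • (z - y) with hm
    have hmB : m ∈ closedBall xb ρ := by
      have h : m = (2⁻¹:ℝ) • y + (2⁻¹:ℝ) • z := by rw [hm]; module
      rw [h]
      exact (convex_closedBall xb ρ) hyB hzB (by norm_num) (by norm_num) (by norm_num)
    have hfy : f y ∈ Θ := by
      have h : y ∈ Ω ∩ U := ⟨hyΩ, hballU hyB⟩
      rw [hrep] at h; exact h.2
    have hfz : f z ∈ Θ := by
      have h : z ∈ Ω ∩ U := ⟨hzΩ, hballU hzB⟩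
      rw [hrep] at h; exact h.2
    have hθ : (2⁻¹:ℝ) • f y + (2⁻¹:ℝ) • f z ∈ Θ :=
      hΘconv hfy hfz (by norm_num) (by norm_num) (by norm_num)
    have hE1 : ‖f z - f y - fderiv ℝ f y (z - y)‖ ≤ K * ‖z - y‖^2 := htay y hyB z hzB
    have hE2 : ‖f m - f y - fderiv ℝ f y (m - y)‖ ≤ K * ‖m - y‖^2 := htay y hyB m hmB
    have hmy : m - y = (2⁻¹:ℝ) • (z - y) := by rw [hm]; abel
    have hmynorm : ‖m - y‖^2 = ‖z - y‖^2 / 4 := by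
      rw [hmy, norm_smul, Real.norm_eq_abs,
        abs_of_nonneg (by norm_num : (0:ℝ) ≤ 2⁻¹)]
      ring
    have hfm : ‖f m - ((2⁻¹:ℝ) • f y + (2⁻¹:ℝ) • f z)‖ ≤ K * ‖z - y‖^2 := by
      have hdec : f m - ((2⁻¹:ℝ) • f y + (2⁻¹:ℝ) • f z)
          = (f m - f y - fderiv ℝ f y (m - y))
            - (2⁻¹:ℝ) • (f z - f y - fderiv ℝ f y (z - y)) := by
        rw [hmy, map_smul]
        module
      rw [hdec]
      have htri := norm_sub_le (f m - f y - fderiv ℝ f y (m - y))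
        ((2⁻¹:ℝ) • (f z - f y - fderiv ℝ f y (z - y)))
      rw [norm_smul, Real.norm_eq_abs,
        abs_of_nonneg (by norm_num : (0:ℝ) ≤ 2⁻¹)] at htri
      rw [hmynorm] at hE2
      nlinarith [sq_nonneg (‖z - y‖), hK]
    have h1 : infDist m Ω ≤ κ * infDist (f m) Θ := hsub m (hballU hmB)
    have h2 : infDist (f m) Θ ≤ dist (f m) ((2⁻¹:ℝ) • f y + (2⁻¹:ℝ) • f z) :=
      infDist_le_dist_of_mem hθ
    rw [dist_eq_norm] at h2
    have h3 : infDist (f m) Θ ≤ K * ‖z - y‖^2 := le_trans h2 hfm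
    calc infDist m Ω ≤ κ * infDist (f m) Θ := h1
      _ ≤ κ * (K * ‖z - y‖^2) := mul_le_mul_of_nonneg_left h3 (le_of_lt hκ)
      _ = c/2 * ‖z - y‖^2 := by rw [hc]; ring
  -- choose the small radius
  set ρ' : ℝ := min (ρ/5) ((32*(c+1))⁻¹) with hρ'
  have hcpos : (0:ℝ) < 32*(c+1) := by linarith
  have hρ'pos : 0 < ρ' := lt_min (by linarith) (by positivity)
  have hρ'1 : ρ' ≤ ρ/5 := min_le_left _ _
  have hρ'2 : ρ' ≤ (32*(c+1))⁻¹ := min_le_right _ _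
  have hinv : (32*(c+1)) * (32*(c+1))⁻¹ = 1 := mul_inv_cancel₀ (ne_of_gt hcpos)
  refine ⟨4*(2*c+1)*(‖vb‖+1) + 1, by nlinarith [norm_nonneg vb], ball xb ρ', ball_mem_nhds xb hρ'pos,
    ball vb 1, ball_mem_nhds vb one_pos, isBounded_ball, ?_⟩
  intro x hx u hu v hv
  obtain ⟨hxΩ, hxB⟩ := hx
  obtain ⟨huΩ, huB⟩ := hu
  obtain ⟨hvN, hvB⟩ := hv
  rw [mem_ball, dist_eq_norm] at hxB huB hvB
  have hxρ : ‖x - xb‖ < ρ' := hxB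
  have huρ : ‖u - xb‖ < ρ' := huB
  -- the hypotheses of key_estimate
  have Hkey : ∀ z ∈ Ω, ‖z - x‖ ≤ 4*ρ' →
      infDist (x + (2⁻¹:ℝ) • (z - x)) Ω ≤ c/2 * ‖z - x‖^2 := by
    intro z hzΩ hzx
    have hxcb : x ∈ closedBall xb ρ := by
      rw [mem_closedBall, dist_eq_norm]
      linarith
    have hzcb : z ∈ closedBall xb ρ := by
      rw [mem_closedBall, dist_eq_norm]
      have : ‖z - xb‖ ≤ ‖z - x‖ + ‖x - xb‖ := norm_sub_le_norm_sub_add_norm_sub z x xb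
      linarith
    exact Hpara x ⟨hxΩ, hxcb⟩ z ⟨hzΩ, hzcb⟩
  have hux : ‖u - x‖ ≤ 2*ρ' := by
    have h := norm_sub_le_norm_sub_add_norm_sub u xb x
    have h2 : ‖xb - x‖ = ‖x - xb‖ := norm_sub_rev xb x
    linarith
  have hsm2 : ‖u - x‖ ≤ 1/16 := by
    have h32 : (32*(c+1))⁻¹ ≤ 1/32 := by
      rw [show (1/32 : ℝ) = 32⁻¹ by norm_num]
      exact inv_anti₀ (by norm_num) (by linarith)
    linarith
  have hsm1 : c * ‖u - x‖ ≤ 1/16 := by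
    have h1 : ‖u - x‖ ≤ 2 * (32*(c+1))⁻¹ := by linarith
    have h2 : c * ‖u - x‖ ≤ c * (2 * (32*(c+1))⁻¹) :=
      mul_le_mul_of_nonneg_left h1 hc0
    have h3 : (0:ℝ) < (32*(c+1))⁻¹ := by positivity
    nlinarith
  have hkey := key_estimate Ω x hxΩ c (4*ρ') hc0 Hkey u huΩ
    (by linarith) hsm1 hsm2 v hvN
  have hvnorm : ‖v‖ ≤ ‖vb‖ + 1 := by
    have h := norm_sub_le_norm_sub_add_norm_sub v vb 0
    simp only [sub_zero] at h
    have h2 : ‖v - vb‖ = ‖v - vb‖ := rfl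
    calc ‖v‖ = ‖v - vb + vb‖ := by rw [sub_add_cancel]
      _ ≤ ‖v - vb‖ + ‖vb‖ := norm_add_le _ _
      _ ≤ ‖vb‖ + 1 := by linarith
  calc v (u - x) ≤ 4*(2*c+1)*‖v‖*‖u - x‖^2 := hkey
    _ ≤ (4*(2*c+1)*(‖vb‖+1) + 1) * ‖u - x‖^2 := by
        nlinarith [mul_le_mul_of_nonneg_right
          (mul_le_mul_of_nonneg_left hvnorm (by linarith : (0:ℝ) ≤ 4*(2*c+1)))
          (sq_nonneg ‖u - x‖)]
end
end

section
/- Let X and Y be normed spaces, let ϑ : X → (-∞,∞] be locally Lipschitz continuous around x̄ and epi-differentiable at x̄, let f : X → Y be continuously differentiable around x̄, and let Θ ⊂ Y be locally closed around ȳ := f(x̄) ∈ Θ. Suppose x̄ is a local minimizer of the problem: minimize ϑ(x) subject to f(x) ∈ Θ, and that the Abadie constraint qualification T_Ω(x̄) = {u ∈ X : ∇f(x̄)u ∈ T_Θ(ȳ)} holds, where Ω := {x ∈ X : f(x) ∈ Θ}. Then for every u ∈ X with ∇f(x̄)u ∈ T_Θ(ȳ) one has dϑ(x̄)(u) ≥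 0. -/
open Filter Topology Set Metric Pointwise

noncomputable section

variable {E : Type*} [NormedAddCommGroup E] [NormedSpace ℝ E]

/-- primal necessary optimality conditions under the Abadie
constraint qualification. -/
theorem primal_necessary_optimality_AQC
    {X Y : Type*} [NormedAddCommGroup X] [NormedSpace ℝ X]
    [NormedAddCommGroup Y] [NormedSpace ℝ Y]
    (ϑ : X → EReal) (f : X → Y) (f' : X →L[ℝ] Y) (Θ : Set Y) (xb : X)
    (hϑbot : ∀ x, ϑ x ≠ ⊥)
    (hϑlip : LocLipschitzAt ϑ xb) (hϑepi : epiDiffAt ϑ xb)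
    (hf : ContDiffAt ℝ 1 f xb) (hf' : HasFDerivAt f f' xb)
    (hΘloc : ∃ V ∈ 𝓝 (f xb), IsClosed (Θ ∩ V))
    (hfeas : f xb ∈ Θ)
    (hmin : ∃ U ∈ 𝓝 xb, ∀ x ∈ U, f x ∈ Θ → ϑ xb ≤ ϑ x)
    (hAQC : contTangent {x | f x ∈ Θ} xb =
      {u : X | f' u ∈ contTangent Θ (f xb)}) :
    ∀ u : X, f' u ∈ contTangent Θ (f xb) → (0 : EReal) ≤ subDeriv ϑ xb u := by
  intro u hu
  by_contra hcon
  push_neg at hcon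
  -- pick a real r with subDeriv ≤ r < 0
  obtain ⟨r, hr1, hr2⟩ : ∃ r : ℝ, subDeriv ϑ xb u ≤ (r : EReal) ∧ r < 0 := by
    obtain ⟨z, hz1, hz2⟩ := exists_between hcon
    have hzt : z ≠ ⊤ := ne_top_of_lt hz2
    have hzb : z ≠ ⊥ := ne_bot_of_gt hz1
    refine ⟨z.toReal, ?_, ?_⟩
    · rw [EReal.coe_toReal hzt hzb]; exact hz1.le
    · have : (z.toReal : EReal) < ((0:ℝ) : EReal) := by
        rw [EReal.coe_toReal hzt hzb]; exact_mod_cast hz2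
      exact_mod_cast this
  -- tangent direction in Ω
  have hu' : u ∈ contTangent {x | f x ∈ Θ} xb := by rw [hAQC]; exact hu
  obtain ⟨t, v, ht0, htlim, hvlim, hvΩ⟩ := hu'
  -- epi-differentiability inner limit
  have hepi : (u, r) ∈ innerLim (fun s => epiSet (fun w => diffQuot ϑ xb s w)) := by
    rw [hϑepi.2]; exact hr1
  obtain ⟨w, hwlim, hwmem⟩ := hepi t ht0 htlim
  have hw1 : Tendsto (fun k => (w k).1) atTop (𝓝 u) :=
    (continuous_fst.tendsto _).comp hwlim
  have hw2 : Tendsto (fun k => (w k).2) atTop (𝓝 r) :=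
    (continuous_snd.tendsto _).comp hwlim
  obtain ⟨ℓ, U, hU, hfin, hlip⟩ := hϑlip
  obtain ⟨U', hU', hmin'⟩ := hmin
  -- the perturbed points converge to xb
  have hxv : Tendsto (fun k => xb + t k • v k) atTop (𝓝 xb) := by
    have : Tendsto (fun k => t k • v k) atTop (𝓝 ((0:ℝ) • u)) := htlim.smul hvlim
    rw [zero_smul] at this
    simpa using tendsto_const_nhds.add this
  have hxw : Tendsto (fun k => xb + t k • (w k).1) atTop (𝓝 xb) := by
    have : Tendsto (fun k => t k • (w k).1) atTop (𝓝 ((0:ℝ) • u)) := htlim.smul hw1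
    rw [zero_smul] at this
    simpa using tendsto_const_nhds.add this
  have hxb_mem : xb ∈ U := mem_of_mem_nhds hU
  have hϑxb_top : ϑ xb ≠ ⊤ := hfin xb hxb_mem
  -- eventual inequality : (w k).2 ≥ -ℓ * ‖v k - (w k).1‖
  have hev : ∀ᶠ k in atTop, -(ℓ * ‖v k - (w k).1‖) ≤ (w k).2 := by
    filter_upwards [hxv.eventually_mem hU, hxv.eventually_mem hU',
      hxw.eventually_mem hU, hwmem] with k hkvU hkvU' hkwU hkw
    set A : ℝ := (ϑ (xb + t k • (w k).1)).toReal with hA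
    set B : ℝ := (ϑ xb).toReal with hB
    set C : ℝ := (ϑ (xb + t k • v k)).toReal with hC
    have hAe : ϑ (xb + t k • (w k).1) = (A : EReal) :=
      (EReal.coe_toReal (hfin _ hkwU) (hϑbot _)).symm
    have hBe : ϑ xb = (B : EReal) := (EReal.coe_toReal hϑxb_top (hϑbot _)).symm
    have hCe : ϑ (xb + t k • v k) = (C : EReal) :=
      (EReal.coe_toReal (hfin _ hkvU) (hϑbot _)).symm
    -- minimality : B ≤ C
    have hBC : B ≤ C := by
      have := hmin' _ hkvU' (hvΩ k)
      rw [hBe, hCe] at this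
      exact_mod_cast this
    -- Lipschitz : C - A ≤ ℓ * (t k * ‖v k - (w k).1‖)
    have hnorm : ‖(xb + t k • v k) - (xb + t k • (w k).1)‖
        = t k * ‖v k - (w k).1‖ := by
      rw [show (xb + t k • v k) - (xb + t k • (w k).1) = t k • (v k - (w k).1) by
        rw [smul_sub]; abel]
      rw [norm_smul, Real.norm_eq_abs, abs_of_pos (ht0 k)]
    have hCA : C - A ≤ ℓ * (t k * ‖v k - (w k).1‖) := by
      have := hlip _ hkvU _ hkwU
      rw [hAe, hCe, hnorm, ← EReal.coe_sub] at this
      exact_mod_cast this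
    -- diff quotient bound from epigraph membership
    have hdq : (t k)⁻¹ * (A - B) ≤ (w k).2 := by
      have := hkw
      simp only [epiSet, diffQuot, Set.mem_setOf_eq] at this
      rw [hAe, hBe, ← EReal.coe_sub, ← EReal.coe_mul] at this
      exact_mod_cast this
    -- combine
    have hAB : -(ℓ * (t k * ‖v k - (w k).1‖)) ≤ A - B := by
      have : B - (ℓ * (t k * ‖v k - (w k).1‖)) ≤ A := by linarith
      linarith
    have htpos := ht0 k
    calc -(ℓ * ‖v k - (w k).1‖)
        = (t k)⁻¹ * (-(ℓ * (t k * ‖v k - (w k).1‖))) := by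
          field_simp
      _ ≤ (t k)⁻¹ * (A - B) := by
          apply mul_le_mul_of_nonneg_left hAB (le_of_lt (inv_pos.mpr htpos))
      _ ≤ (w k).2 := hdq
  -- pass to the limit
  have hlim0 : Tendsto (fun k => -(ℓ * ‖v k - (w k).1‖)) atTop (𝓝 (-(ℓ * ‖u - u‖))) := by
    exact (((hvlim.sub hw1).norm).const_mul ℓ).neg
  rw [sub_self, norm_zero, mul_zero, neg_zero] at hlim0
  have : (0:ℝ) ≤ r := le_of_tendsto_of_tendsto hlim0 hw2 hev
  linarith
end
end
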